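/- arXiv:1712.08957 — 3 statements merged into one kernel-verified Lean document; each statement's English description precedes it below -/
import Mathlib

section
/- Let β > 0 and set Θ := max{d²·e^{2λ(β)}, d·e^{λ(2β)}}. Let t ∈ (0,1) satisfy (Θ/(d²·e^{2λ(β)}))^{1−t} < d₁^t. Then for every u ∈ ℝ, almost surely liminf_{n→∞} (1/n)·log Z_n^{ST}(β,u) ≥ (1−t)·(λ(β) + log d) + t·(βu + log d₁). (Lemma 2.7: interpolated lower bound via a second-moment argument.) -/
open MeasureTheory ProbabilityTheory Filter

/-- transfer integral along identical distribution -/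
lemma aux_int_eq {Ω : Type*} [MeasurableSpace Ω] (P : Measure Ω) [IsProbabilityMeasure P]
    {d : ℕ} (V : List (Fin d) → Ω → ℝ) (V0 : Ω → ℝ)
    (hmeas : ∀ x, Measurable (V x)) (hmeas0 : Measurable V0)
    (hident : ∀ x : List (Fin d), x ≠ [] → Measure.map (V x) P = Measure.map V0 P)
    (hint : ∀ β : ℝ, Integrable (fun ω => Real.exp (β * V0 ω)) P)
    (c : ℝ) (x : List (Fin d)) (hx : x ≠ []) :
    (∫ ω, Real.exp (c * V x ω) ∂P = ∫ ω, Real.exp (c * V0 ω) ∂P) ∧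
      Integrable (fun ω => Real.exp (c * V x ω)) P := by
  have hg : Measurable fun r : ℝ => Real.exp (c * r) := (measurable_id.const_mul c).exp
  constructor
  · rw [← integral_map (hmeas x).aemeasurable hg.aestronglyMeasurable, hident x hx,
      integral_map hmeas0.aemeasurable hg.aestronglyMeasurable]
  · have h2 : Integrable (fun r : ℝ => Real.exp (c * r)) (Measure.map V0 P) :=
      (integrable_map_measure hg.aestronglyMeasurable hmeas0.aemeasurable).mpr (hint c)
    rw [← hident x hx] at h2
    exact (integrable_map_measure hg.aestronglyMeasurable (hmeas x).aemeasurable).mp h2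

/-- master factorization lemma -/
lemma aux_master {Ω : Type*} [MeasurableSpace Ω] (P : Measure Ω) [IsProbabilityMeasure P]
    {d : ℕ} (V : List (Fin d) → Ω → ℝ) (V0 : Ω → ℝ)
    (hmeas : ∀ x, Measurable (V x)) (hmeas0 : Measurable V0)
    (hindep : iIndepFun V P)
    (hident : ∀ x : List (Fin d), x ≠ [] → Measure.map (V x) P = Measure.map V0 P)
    (hint : ∀ β : ℝ, Integrable (fun ω => Real.exp (β * V0 ω)) P)
    (γ : List (Fin d) → ℝ) (s : Finset (List (Fin d))) (hs : ∀ x ∈ s, x ≠ []) :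
    (∫ ω, Real.exp (∑ x ∈ s, γ x * V x ω) ∂P
      = ∏ x ∈ s, ∫ ω, Real.exp (γ x * V0 ω) ∂P) ∧
      Integrable (fun ω => Real.exp (∑ x ∈ s, γ x * V x ω)) P := by
  set Y : List (Fin d) → Ω → ℝ := fun x ω => γ x * V x ω with hY
  have hYindep : iIndepFun Y P :=
    hindep.comp (fun x r => γ x * r) (fun x => measurable_id.const_mul (γ x))
  have hYmeas : ∀ x, Measurable (Y x) := fun x => (hmeas x).const_mul (γ x)
  have hYint : ∀ x ∈ s, Integrable (fun ω => Real.exp (1 * Y x ω)) P := by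
    intro x hx
    simpa [one_mul] using (aux_int_eq P V V0 hmeas hmeas0 hident hint (γ x) x (hs x hx)).2
  constructor
  · have h1 := hYindep.mgf_sum hYmeas s (t := 1)
    have h2 : ∀ x ∈ s, mgf (Y x) P 1 = ∫ ω, Real.exp (γ x * V0 ω) ∂P := by
      intro x hx
      have := (aux_int_eq P V V0 hmeas hmeas0 hident hint (γ x) x (hs x hx)).1
      simpa [mgf, one_mul] using this
    calc ∫ ω, Real.exp (∑ x ∈ s, γ x * V x ω) ∂P
        = mgf (∑ x ∈ s, Y x) P 1 := by
          simp [mgf, one_mul, Finset.sum_apply]; rfl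
      _ = ∏ x ∈ s, mgf (Y x) P 1 := h1
      _ = ∏ x ∈ s, ∫ ω, Real.exp (γ x * V0 ω) ∂P := Finset.prod_congr rfl h2
  · have := hYindep.integrable_exp_mul_sum hYmeas (s := s) hYint
    simpa [one_mul, Finset.sum_apply] using this



abbrev PathIdx (d d₁ m ℓ' : ℕ) := (Fin m → Fin d₁) × Fin (d - d₁) × (Fin ℓ' → Fin d)

section W
variable {d d₁ m ℓ' : ℕ}

def wmapX (hdd : d₁ < d) (a : PathIdx d d₁ m ℓ') (i : Fin (m + ℓ' + 1)) : Fin d :=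
  if hi : (i : ℕ) < m then Fin.castLE hdd.le (a.1 ⟨i, hi⟩)
  else if hi2 : (i : ℕ) < m + 1 then ⟨d₁ + (a.2.1 : ℕ), by have := a.2.1.isLt; omega⟩
  else a.2.2 ⟨(i : ℕ) - (m + 1), by have := i.isLt; omega⟩

def emap (hdd : d₁ < d) (a : PathIdx d d₁ m ℓ') (k : ℕ) : List (Fin d) :=
  (List.ofFn (wmapX hdd a)).take (m + k + 1)

lemma wmapX_lt (hdd : d₁ < d) (a : PathIdx d d₁ m ℓ') (i : Fin (m + ℓ' + 1)) (h : (i : ℕ) < m) :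
    ((wmapX hdd a i : ℕ)) = (a.1 ⟨i, h⟩ : ℕ) := by
  simp [wmapX, dif_pos h]

lemma wmapX_eq (hdd : d₁ < d) (a : PathIdx d d₁ m ℓ') (i : Fin (m + ℓ' + 1)) (h1 : ¬ (i : ℕ) < m)
    (h2 : (i : ℕ) < m + 1) : ((wmapX hdd a i : ℕ)) = d₁ + (a.2.1 : ℕ) := by
  simp [wmapX, dif_neg h1, dif_pos h2, show (i : ℕ) ≤ m by omega]

lemma wmapX_gt (hdd : d₁ < d) (a : PathIdx d d₁ m ℓ') (i : Fin (m + ℓ' + 1)) (h1 : ¬ (i : ℕ) < m)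
    (h2 : ¬ (i : ℕ) < m + 1) :
    wmapX hdd a i = a.2.2 ⟨(i : ℕ) - (m + 1), by have := i.isLt; omega⟩ := by
  simp [wmapX, dif_neg h1, dif_neg h2, show ¬ (i : ℕ) ≤ m by omega]

lemma wmapX_agree (hdd : d₁ < d) (a a' : PathIdx d d₁ m ℓ') (j : ℕ)
    (h : ∀ i : Fin (m + ℓ' + 1), (i : ℕ) < m + j + 1 → wmapX hdd a i = wmapX hdd a' i)
    (hj : j ≤ ℓ') :
    a.1 = a'.1 ∧ a.2.1 = a'.2.1 ∧ ∀ i : Fin ℓ', (i : ℕ) < j → a.2.2 i = a'.2.2 i := by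
  obtain ⟨v, jj, r⟩ := a; obtain ⟨v', jj', r'⟩ := a'
  refine ⟨?_, ?_, ?_⟩
  · funext i
    have hi : (i : ℕ) < m + ℓ' + 1 := by have := i.isLt; omega
    have heq := h ⟨i, hi⟩ (by simp only [Fin.val_mk]; omega)
    have h1 := wmapX_lt hdd (v, jj, r) ⟨i, hi⟩ i.isLt
    have h2 := wmapX_lt hdd (v', jj', r') ⟨i, hi⟩ i.isLt
    apply Fin.ext
    simp only at h1 h2
    rw [← h1, ← h2, heq]
  · have hm : m < m + ℓ' + 1 := by omega
    have heq := h ⟨m, hm⟩ (by simp only [Fin.val_mk]; omega)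
    have h1 := wmapX_eq hdd (v, jj, r) ⟨m, hm⟩ (by simp only [Fin.val_mk]; omega) (by simp only [Fin.val_mk]; omega)
    have h2 := wmapX_eq hdd (v', jj', r') ⟨m, hm⟩ (by simp only [Fin.val_mk]; omega) (by simp only [Fin.val_mk]; omega)
    apply Fin.ext
    have h1' : ((wmapX hdd (v, jj, r) ⟨m, hm⟩ : Fin d) : ℕ) = d₁ + (jj : ℕ) := h1
    have h2' : ((wmapX hdd (v', jj', r') ⟨m, hm⟩ : Fin d) : ℕ) = d₁ + (jj' : ℕ) := h2
    rw [heq] at h1'; omega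
  · intro i hij
    have hi : m + 1 + (i : ℕ) < m + ℓ' + 1 := by have := i.isLt; omega
    have heq := h ⟨m + 1 + i, hi⟩ (by simp only [Fin.val_mk]; omega)
    have h1 := wmapX_gt hdd (v, jj, r) ⟨m + 1 + i, hi⟩ (by simp only [Fin.val_mk]; omega) (by simp only [Fin.val_mk]; omega)
    have h2 := wmapX_gt hdd (v', jj', r') ⟨m + 1 + i, hi⟩ (by simp only [Fin.val_mk]; omega) (by simp only [Fin.val_mk]; omega)
    simp only at h1 h2
    rw [h1, h2] at heq
    have hidx : (⟨m + 1 + (i : ℕ) - (m + 1), by have := i.isLt; omega⟩ : Fin ℓ') = i := by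
      apply Fin.ext; simp
    rwa [hidx] at heq

lemma wmapX_inj (hdd : d₁ < d) : Function.Injective (wmapX (m := m) (ℓ' := ℓ') hdd) := by
  intro a a' h
  have := wmapX_agree hdd a a' ℓ' (fun i _ => congrFun h i) le_rfl
  obtain ⟨h1, h2, h3⟩ := this
  obtain ⟨v, jj, r⟩ := a; obtain ⟨v', jj', r'⟩ := a'
  simp only at h1 h2 h3
  refine Prod.ext h1 (Prod.ext h2 ?_)
  funext i
  exact h3 i i.isLt

lemma emap_length (hdd : d₁ < d) (a : PathIdx d d₁ m ℓ') {k : ℕ} (hk : k ≤ ℓ') :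
    (emap hdd a k).length = m + k + 1 := by
  simp [emap, List.length_take]; omega

lemma emap_ne_nil (hdd : d₁ < d) (a : PathIdx d d₁ m ℓ') {k : ℕ} (hk : k ≤ ℓ') :
    emap hdd a k ≠ [] := by
  rw [← List.length_pos_iff_ne_nil, emap_length hdd a hk]; omega

lemma emap_getElem (hdd : d₁ < d) (a : PathIdx d d₁ m ℓ') {k : ℕ} (hk : k ≤ ℓ')
    (i : Fin (m + ℓ' + 1)) (hik : (i : ℕ) < m + k + 1) :
    (emap hdd a k)[(i : ℕ)]'(by rw [emap_length hdd a hk]; exact hik) = wmapX hdd a i := by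
  simp only [emap, List.getElem_take, List.getElem_ofFn, Fin.eta]

lemma emap_inj_k (hdd : d₁ < d) (a a' : PathIdx d d₁ m ℓ') {k k' : ℕ} (hk : k ≤ ℓ')
    (hk' : k' ≤ ℓ') (h : emap hdd a k = emap hdd a' k') : k = k' := by
  have h1 := emap_length hdd a hk
  have h2 := emap_length hdd a' hk'
  rw [h] at h1; omega

lemma emap_decode (hdd : d₁ < d) (a a' : PathIdx d d₁ m ℓ') {k : ℕ} (hk : k ≤ ℓ')
    (h : emap hdd a k = emap hdd a' k) (i : Fin (m + ℓ' + 1)) (hik : (i : ℕ) < m + k + 1) :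
    wmapX hdd a i = wmapX hdd a' i := by
  rw [← emap_getElem hdd a hk i hik, ← emap_getElem hdd a' hk i hik]
  simp only [h]

lemma emap_take (hdd : d₁ < d) (a : PathIdx d d₁ m ℓ') {j k : ℕ} (hjk : j ≤ k) :
    emap hdd a j = (emap hdd a k).take (m + j + 1) := by
  simp only [emap, List.take_take]
  congr 1
  omega

lemma emap_mono (hdd : d₁ < d) (a a' : PathIdx d d₁ m ℓ') {j k : ℕ} (hjk : j ≤ k)
    (h : emap hdd a k = emap hdd a' k) : emap hdd a j = emap hdd a' j := by
  rw [emap_take hdd a hjk, emap_take hdd a' hjk, h]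

lemma emap_encode (hdd : d₁ < d) (a a' : PathIdx d d₁ m ℓ') {k : ℕ} (hk : k ≤ ℓ')
    (h : ∀ i : Fin (m + ℓ' + 1), (i : ℕ) < m + k + 1 → wmapX hdd a i = wmapX hdd a' i) :
    emap hdd a k = emap hdd a' k := by
  apply List.ext_getElem (by rw [emap_length hdd a hk, emap_length hdd a' hk])
  intro i h1 h2
  rw [emap_length hdd a hk] at h1
  have hi : i < m + ℓ' + 1 := by omega
  have e1 := emap_getElem hdd a hk ⟨i, hi⟩ h1
  have e2 := emap_getElem hdd a' hk ⟨i, hi⟩ h1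
  simp only [Fin.val_mk] at e1 e2
  rw [e1, e2]
  exact h ⟨i, hi⟩ h1

lemma cond_iff (hdd : d₁ < d) (a : PathIdx d d₁ m ℓ') {k : ℕ} (hk : k < m + ℓ' + 1) :
    (∀ x ∈ (List.ofFn (wmapX hdd a)).take (k + 1), (x : ℕ) < d₁) ↔ k < m := by
  constructor
  · intro hall
    by_contra hge
    push_neg at hge
    have hlt : m < ((List.ofFn (wmapX hdd a)).take (k + 1)).length := by
      simp [List.length_take]; omega
    have hmem : ((List.ofFn (wmapX hdd a)).take (k + 1))[m]'hlt ∈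
        (List.ofFn (wmapX hdd a)).take (k + 1) := List.getElem_mem _
    have hval := hall _ hmem
    rw [List.getElem_take, List.getElem_ofFn] at hval
    have hv : ((wmapX hdd a ⟨m, by omega⟩ : Fin d) : ℕ) = d₁ + (a.2.1 : ℕ) := by
      simp [wmapX]
    rw [show (⟨m, _⟩ : Fin (m + ℓ' + 1)) = ⟨m, by omega⟩ from rfl] at hval
    rw [hv] at hval
    omega
  · intro hkm x hx
    rw [List.mem_iff_getElem] at hx
    obtain ⟨i, hi, hx⟩ := hx
    have hi' : i < m := by simp [List.length_take] at hi; omega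
    have hin : i < m + ℓ' + 1 := by omega
    rw [List.getElem_take, List.getElem_ofFn] at hx
    rw [← hx]
    have hv : ((wmapX hdd a ⟨i, by simpa [List.length_ofFn] using hin⟩ : Fin d) : ℕ)
        = (a.1 ⟨i, hi'⟩ : ℕ) := by
      simp [wmapX, hi']
    rw [hv]
    exact (a.1 ⟨i, hi'⟩).isLt
end W

section Count
variable {d d₁ m ℓ' : ℕ}

noncomputable def ssE (hdd : d₁ < d) (a : PathIdx d d₁ m ℓ') : Finset (List (Fin d)) :=
  (Finset.range (ℓ' + 1)).image (emap hdd a)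

lemma ssE_injOn (hdd : d₁ < d) (a : PathIdx d d₁ m ℓ') :
    Set.InjOn (emap hdd a) (Finset.range (ℓ' + 1)) := by
  intro k hk k' hk' h
  simp only [Finset.coe_range, Set.mem_Iio] at hk hk'
  exact emap_inj_k hdd a a (by omega) (by omega) h

lemma ssE_card (hdd : d₁ < d) (a : PathIdx d d₁ m ℓ') : (ssE hdd a).card = ℓ' + 1 := by
  rw [ssE, Finset.card_image_of_injOn (ssE_injOn hdd a), Finset.card_range]

lemma ssE_ne_nil (hdd : d₁ < d) (a : PathIdx d d₁ m ℓ') :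
    ∀ x ∈ ssE hdd a, x ≠ [] := by
  intro x hx
  rw [ssE, Finset.mem_image] at hx
  obtain ⟨k, hk, rfl⟩ := hx
  exact emap_ne_nil hdd a (by simp at hk; omega)

lemma ssE_inter (hdd : d₁ < d) (a a' : PathIdx d d₁ m ℓ') :
    ssE hdd a ∩ ssE hdd a'
      = ((Finset.range (ℓ' + 1)).filter
          (fun k => emap hdd a k = emap hdd a' k)).image (emap hdd a) := by
  ext x
  constructor
  · intro hx
    rw [Finset.mem_inter, ssE, ssE, Finset.mem_image, Finset.mem_image] at hx
    obtain ⟨⟨k, hk, rfl⟩, ⟨k', hk', he⟩⟩ := hx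
    simp only [Finset.mem_range] at hk hk'
    have hkk : k' = k := emap_inj_k hdd a' a (by omega) (by omega) he
    have he' : emap hdd a k = emap hdd a' k := by rw [hkk] at he; exact he.symm
    exact Finset.mem_image.mpr ⟨k, Finset.mem_filter.mpr
      ⟨Finset.mem_range.mpr hk, he'⟩, rfl⟩
  · intro hx
    rw [Finset.mem_image] at hx
    obtain ⟨k, hk, rfl⟩ := hx
    rw [Finset.mem_filter] at hk
    obtain ⟨hk1, hk2⟩ := hk
    rw [Finset.mem_inter, ssE, ssE]
    exact ⟨Finset.mem_image.mpr ⟨k, hk1, rfl⟩, Finset.mem_image.mpr ⟨k, hk1, hk2.symm⟩⟩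

lemma ssE_inter_card (hdd : d₁ < d) (a a' : PathIdx d d₁ m ℓ') :
    (ssE hdd a ∩ ssE hdd a').card
      = ((Finset.range (ℓ' + 1)).filter (fun k => emap hdd a k = emap hdd a' k)).card := by
  rw [ssE_inter]
  exact Finset.card_image_of_injOn ((ssE_injOn hdd a).mono (by
    intro k hk
    simp only [Finset.coe_filter, Set.mem_setOf_eq] at hk
    simpa using hk.1))

lemma ssE_card_le (hdd : d₁ < d) (a a' : PathIdx d d₁ m ℓ') :
    (ssE hdd a ∩ ssE hdd a').card ≤ ℓ' + 1 := by
  calc (ssE hdd a ∩ ssE hdd a').card ≤ (ssE hdd a).card :=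
        Finset.card_le_card Finset.inter_subset_left
    _ = ℓ' + 1 := ssE_card hdd a

lemma agree_of_card (hdd : d₁ < d) (a a' : PathIdx d d₁ m ℓ') {j : ℕ} (hj : 1 ≤ j)
    (h : (ssE hdd a ∩ ssE hdd a').card = j) :
    emap hdd a (j - 1) = emap hdd a' (j - 1) := by
  rw [ssE_inter_card] at h
  set K := (Finset.range (ℓ' + 1)).filter (fun k => emap hdd a k = emap hdd a' k) with hK
  have hex : ∃ k ∈ K, j - 1 ≤ k := by
    by_contra hco
    push_neg at hco
    have : K ⊆ Finset.range (j - 1) := by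
      intro k hk
      exact Finset.mem_range.mpr (hco k hk)
    have := Finset.card_le_card this
    rw [h, Finset.card_range] at this
    omega
  obtain ⟨k, hk, hjk⟩ := hex
  rw [hK, Finset.mem_filter] at hk
  exact emap_mono hdd a a' (by omega) hk.2

lemma count_fiber (hdd : d₁ < d) (a : PathIdx d d₁ m ℓ') {j : ℕ} (hj1 : 1 ≤ j)
    (hjl : j ≤ ℓ' + 1) :
    ((Finset.univ : Finset (PathIdx d d₁ m ℓ')).filter
        (fun a' => (ssE hdd a ∩ ssE hdd a').card = j)).card ≤ d ^ (ℓ' + 1 - j) := by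
  classical
  have key : ∀ a' ∈ (Finset.univ : Finset (PathIdx d d₁ m ℓ')).filter
      (fun a' => (ssE hdd a ∩ ssE hdd a').card = j),
      a'.1 = a.1 ∧ a'.2.1 = a.2.1 ∧ ∀ i : Fin ℓ', (i : ℕ) < j - 1 → a'.2.2 i = a.2.2 i := by
    intro a' ha'
    rw [Finset.mem_filter] at ha'
    have hag := agree_of_card hdd a a' hj1 ha'.2
    have hdec := emap_decode hdd a a' (k := j - 1) (by omega) hag
    exact wmapX_agree hdd a' a (j - 1)
      (fun i hi => (hdec i (by omega)).symm) (by omega)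
  set φ : PathIdx d d₁ m ℓ' → (Fin (ℓ' + 1 - j) → Fin d) :=
    fun a' i => a'.2.2 ⟨j - 1 + (i : ℕ), by have := i.isLt; omega⟩ with hφ
  have hinj : Set.InjOn φ ((Finset.univ : Finset (PathIdx d d₁ m ℓ')).filter
      (fun a' => (ssE hdd a ∩ ssE hdd a').card = j)) := by
    intro a1 h1 a2 h2 heq
    obtain ⟨hv1, hj1', hr1⟩ := key a1 (by simpa using h1)
    obtain ⟨hv2, hj2', hr2⟩ := key a2 (by simpa using h2)
    obtain ⟨v1, jj1, r1⟩ := a1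
    obtain ⟨v2, jj2, r2⟩ := a2
    simp only at hv1 hv2 hj1' hj2' hr1 hr2
    refine Prod.ext (hv1.trans hv2.symm) (Prod.ext (hj1'.trans hj2'.symm) ?_)
    funext i
    by_cases hij : (i : ℕ) < j - 1
    · exact (hr1 i hij).trans (hr2 i hij).symm
    · have hi2 : (i : ℕ) - (j - 1) < ℓ' + 1 - j := by have := i.isLt; omega
      have := congrFun heq ⟨(i : ℕ) - (j - 1), hi2⟩
      simp only [hφ] at this
      have hidx : (⟨j - 1 + ((i : ℕ) - (j - 1)), by omega⟩ : Fin ℓ') = i := by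
        apply Fin.ext; simp; omega
      rwa [hidx] at this
  calc ((Finset.univ : Finset (PathIdx d d₁ m ℓ')).filter
        (fun a' => (ssE hdd a ∩ ssE hdd a').card = j)).card
      ≤ (Finset.univ : Finset (Fin (ℓ' + 1 - j) → Fin d)).card :=
        Finset.card_le_card_of_injOn φ (fun _ _ => Finset.mem_univ _) hinj
    _ = d ^ (ℓ' + 1 - j) := by simp [Finset.card_univ]

end Count
section PerN
variable {Ω : Type*} [MeasurableSpace Ω]

lemma term_bound {dR I1 I2 q : ℝ} (hd : 1 ≤ dR) (hI1 : 0 < I1) (hI2 : 0 ≤ I2)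
    (hq1 : 1 ≤ q) (hq2 : I2 ≤ dR * I1 ^ 2 * q) {j l : ℕ} (hj : j ≤ l) :
    dR ^ (l - j) * (I2 ^ j * I1 ^ (2 * l - 2 * j)) ≤ dR ^ l * q ^ l * I1 ^ (2 * l) := by
  have hq0 : 0 < q := lt_of_lt_of_le one_pos hq1
  have h1 : I2 ^ j ≤ (dR * I1 ^ 2 * q) ^ j := pow_le_pow_left₀ hI2 hq2 j
  have h2 : (dR * I1 ^ 2 * q) ^ j = dR ^ j * I1 ^ (2 * j) * q ^ j := by
    rw [mul_pow, mul_pow, ← pow_mul]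
  have h3 : dR ^ (l - j) * (I2 ^ j * I1 ^ (2 * l - 2 * j))
      ≤ dR ^ (l - j) * ((dR ^ j * I1 ^ (2 * j) * q ^ j) * I1 ^ (2 * l - 2 * j)) := by
    apply mul_le_mul_of_nonneg_left _ (by positivity)
    apply mul_le_mul_of_nonneg_right _ (by positivity)
    rw [← h2]; exact h1
  refine h3.trans ?_
  have e1 : dR ^ (l - j) * dR ^ j = dR ^ l := by
    rw [← pow_add]; congr 1; omega
  have e2 : I1 ^ (2 * j) * I1 ^ (2 * l - 2 * j) = I1 ^ (2 * l) := by
    rw [← pow_add]; congr 1; omega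
  have e3 : q ^ j ≤ q ^ l := pow_le_pow_right₀ hq1 hj
  calc dR ^ (l - j) * ((dR ^ j * I1 ^ (2 * j) * q ^ j) * I1 ^ (2 * l - 2 * j))
      = (dR ^ (l - j) * dR ^ j) * (I1 ^ (2 * j) * I1 ^ (2 * l - 2 * j)) * q ^ j := by ring
    _ = dR ^ l * I1 ^ (2 * l) * q ^ j := by rw [e1, e2]
    _ ≤ dR ^ l * I1 ^ (2 * l) * q ^ l := by
        apply mul_le_mul_of_nonneg_left e3 (by positivity)
    _ = dR ^ l * q ^ l * I1 ^ (2 * l) := by ring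

lemma per_n (P : Measure Ω) [IsProbabilityMeasure P]
    (d d₁ : ℕ) (hd : 2 ≤ d) (hd₁ : 1 ≤ d₁) (hdd : d₁ < d)
    (V : List (Fin d) → Ω → ℝ) (V0 : Ω → ℝ)
    (hmeas : ∀ x, Measurable (V x)) (hmeas0 : Measurable V0)
    (hindep : iIndepFun V P)
    (hident : ∀ x : List (Fin d), x ≠ [] → Measure.map (V x) P = Measure.map V0 P)
    (hint : ∀ β : ℝ, Integrable (fun ω => Real.exp (β * V0 ω)) P)
    (β u : ℝ) (I1 I2 q : ℝ)
    (hI1 : I1 = ∫ ω, Real.exp (β * V0 ω) ∂P)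
    (hI2 : I2 = ∫ ω, Real.exp (2 * β * V0 ω) ∂P)
    (hI1pos : 0 < I1) (hI2pos : 0 < I2)
    (hq1 : 1 ≤ q) (hq2 : I2 ≤ d * I1 ^ 2 * q)
    (m ℓ' : ℕ) :
    ∃ S : Ω → ℝ, Measurable S ∧
      (∀ ω, Real.exp (β * u * m) * S ω ≤
        ∑ w : Fin (m + ℓ' + 1) → Fin d, Real.exp (β * ∑ k ∈ Finset.range (m + ℓ' + 1),
          (if ∀ a ∈ (List.ofFn w).take (k + 1), (a : ℕ) < d₁ then u
           else V ((List.ofFn w).take (k + 1)) ω))) ∧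
      P {ω | S ω ≤ ((d₁ : ℝ) ^ m * ((d - d₁ : ℕ) : ℝ) * (d : ℝ) ^ ℓ' * I1 ^ (ℓ' + 1)) / 2}
        ≤ ENNReal.ofReal (4 * d * (ℓ' + 1) * q ^ (ℓ' + 1) / (d₁ : ℝ) ^ m) := by
  classical
  set l := ℓ' + 1 with hl
  set A := PathIdx d d₁ m ℓ' with hA
  set X : PathIdx d d₁ m ℓ' → Ω → ℝ :=
    fun a ω => Real.exp (∑ x ∈ ssE hdd a, β * V x ω) with hX
  set S : Ω → ℝ := fun ω => ∑ a : PathIdx d d₁ m ℓ', X a ω with hS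
  set AA : ℝ := (d₁ : ℝ) ^ m * ((d - d₁ : ℕ) : ℝ) * (d : ℝ) ^ ℓ' with hAA
  set μS : ℝ := AA * I1 ^ l with hμS
  -- measurability
  have hXmeas : ∀ a, Measurable (X a) := fun a =>
    (Finset.measurable_sum _ (fun x _ => (hmeas x).const_mul β)).exp
  have hSmeas : Measurable S := Finset.measurable_sum _ (fun a _ => hXmeas a)
  -- first moment of X a
  have hX1 : ∀ a : PathIdx d d₁ m ℓ', (∫ ω, X a ω ∂P = I1 ^ l) ∧ Integrable (X a) P := by
    intro a
    have hM := aux_master P V V0 hmeas hmeas0 hindep hident hint (fun _ => β)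
      (ssE hdd a) (ssE_ne_nil hdd a)
    refine ⟨?_, hM.2⟩
    rw [hX]
    rw [hM.1, Finset.prod_const, ssE_card, ← hI1]
  -- second moments
  have hXX : ∀ a a' : PathIdx d d₁ m ℓ',
      (∫ ω, X a ω * X a' ω ∂P =
        I2 ^ ((ssE hdd a ∩ ssE hdd a').card)
          * I1 ^ (2 * l - 2 * (ssE hdd a ∩ ssE hdd a').card)) ∧
      Integrable (fun ω => X a ω * X a' ω) P := by
    intro a a'
    set γ : List (Fin d) → ℝ :=
      fun x => if x ∈ ssE hdd a ∩ ssE hdd a' then 2 * β else β with hγ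
    have hsubU : ssE hdd a ∩ ssE hdd a' ⊆ ssE hdd a ∪ ssE hdd a' :=
      Finset.inter_subset_left.trans Finset.subset_union_left
    have hprod : ∀ ω, X a ω * X a' ω =
        Real.exp (∑ x ∈ ssE hdd a ∪ ssE hdd a', γ x * V x ω) := by
      intro ω
      rw [hX, ← Real.exp_add]
      congr 1
      have hster : ∀ x ∈ ssE hdd a ∪ ssE hdd a', γ x * V x ω
          = β * V x ω + (if x ∈ ssE hdd a ∩ ssE hdd a' then β * V x ω else 0) := by
        intro x hx
        by_cases hxi : x ∈ ssE hdd a ∩ ssE hdd a'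
        · rw [hγ]; simp only [if_pos hxi]; ring
        · rw [hγ]; simp only [if_neg hxi]; ring
      rw [Finset.sum_congr rfl hster, Finset.sum_add_distrib, Finset.sum_ite_mem,
        Finset.inter_eq_right.mpr hsubU, Finset.sum_union_inter]
    have hneU : ∀ x ∈ ssE hdd a ∪ ssE hdd a', x ≠ [] := by
      intro x hx
      rcases Finset.mem_union.mp hx with h | h
      · exact ssE_ne_nil hdd a x h
      · exact ssE_ne_nil hdd a' x h
    have hM := aux_master P V V0 hmeas hmeas0 hindep hident hint γ
      (ssE hdd a ∪ ssE hdd a') hneU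
    constructor
    · have hint2 : ∫ ω, X a ω * X a' ω ∂P
          = ∫ ω, Real.exp (∑ x ∈ ssE hdd a ∪ ssE hdd a', γ x * V x ω) ∂P := by
        congr 1; funext ω; exact hprod ω
      rw [hint2, hM.1]
      have hpc : ∀ x ∈ ssE hdd a ∪ ssE hdd a',
          (∫ ω, Real.exp (γ x * V0 ω) ∂P)
            = (if x ∈ ssE hdd a ∩ ssE hdd a' then I2 else I1) := by
        intro x hx
        by_cases hxi : x ∈ ssE hdd a ∩ ssE hdd a'
        · rw [hγ]; simp only [if_pos hxi]; rw [hI2]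
        · rw [hγ]; simp only [if_neg hxi]; rw [hI1]
      have hcard : (ssE hdd a ∪ ssE hdd a').card - (ssE hdd a ∩ ssE hdd a').card
          = 2 * l - 2 * (ssE hdd a ∩ ssE hdd a').card := by
        have hcu := Finset.card_union_add_card_inter (ssE hdd a) (ssE hdd a')
        rw [ssE_card, ssE_card] at hcu
        rw [hl]
        omega
      rw [Finset.prod_congr rfl hpc, Finset.prod_ite, Finset.prod_const, Finset.prod_const,
        Finset.filter_mem_eq_inter, Finset.inter_eq_right.mpr hsubU,
        ← Finset.sdiff_eq_filter, Finset.card_sdiff_of_subset hsubU, hcard]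
    · exact (integrable_congr (Filter.Eventually.of_forall
        (fun ω => (hprod ω).symm))).mp hM.2
  -- cast of cardinalities
  have hd1R : (0:ℝ) < (d₁ : ℝ) := by exact_mod_cast Nat.lt_of_lt_of_le Nat.zero_lt_one hd₁
  have hdd1R : (0:ℝ) < ((d - d₁ : ℕ) : ℝ) := by
    have : 0 < d - d₁ := by omega
    exact_mod_cast this
  have hdR : (0:ℝ) < (d : ℝ) := by positivity
  have hdR1 : (1:ℝ) ≤ (d : ℝ) := by exact_mod_cast Nat.one_le_of_lt hd
  have hAApos : 0 < AA := by rw [hAA]; positivity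
  have hcardA : (Fintype.card (PathIdx d d₁ m ℓ') : ℝ) = AA := by
    rw [hAA]
    simp [PathIdx, Fintype.card_fun]
    push_cast
    ring
  set TT : ℝ := (d:ℝ) ^ l * q ^ l * I1 ^ (2 * l) with hTT
  have hTTpos : 0 < TT := by
    rw [hTT]
    have hq0 : (0:ℝ) < q := lt_of_lt_of_le one_pos hq1
    positivity
  have hμpos : 0 < μS := by rw [hμS]; positivity
  -- alternative description of X
  have hXalt : ∀ (a : PathIdx d d₁ m ℓ') ω,
      X a ω = Real.exp (β * ∑ k ∈ Finset.range l, V (emap hdd a k) ω) := by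
    intro a ω
    rw [hX]
    simp only []
    rw [ssE, Finset.sum_image (fun k hk k' hk' h => emap_inj_k hdd a a
      (by simp at hk; omega) (by simp at hk'; omega) h), Finset.mul_sum, hl]
  -- lower bound for the partition sum
  have hZv : ∀ ω, Real.exp (β * u * m) * S ω ≤
      ∑ w : Fin (m + ℓ' + 1) → Fin d, Real.exp (β * ∑ k ∈ Finset.range (m + ℓ' + 1),
        (if ∀ a ∈ (List.ofFn w).take (k + 1), (a : ℕ) < d₁ then u
         else V ((List.ofFn w).take (k + 1)) ω)) := by
    intro ω
    have hstep1 : ∀ a : PathIdx d d₁ m ℓ',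
        Real.exp (β * ∑ k ∈ Finset.range (m + ℓ' + 1),
          (if ∀ x ∈ (List.ofFn (wmapX hdd a)).take (k + 1), (x : ℕ) < d₁ then u
           else V ((List.ofFn (wmapX hdd a)).take (k + 1)) ω))
        = Real.exp (β * u * m) * X a ω := by
      intro a
      have hin : ∀ k ∈ Finset.range (m + ℓ' + 1),
          (if ∀ x ∈ (List.ofFn (wmapX hdd a)).take (k + 1), (x : ℕ) < d₁ then u
           else V ((List.ofFn (wmapX hdd a)).take (k + 1)) ω)
          = (if k < m then u else V ((List.ofFn (wmapX hdd a)).take (k + 1)) ω) := by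
        intro k hk
        rw [Finset.mem_range] at hk
        by_cases hkm : k < m
        · rw [if_pos ((cond_iff hdd a hk).mpr hkm), if_pos hkm]
        · rw [if_neg (fun hcon => hkm ((cond_iff hdd a hk).mp hcon)), if_neg hkm]
      rw [Finset.sum_congr rfl hin, Finset.range_eq_Ico,
        ← Finset.sum_Ico_consecutive _ (Nat.zero_le m) (by omega : m ≤ m + ℓ' + 1)]
      have hfirst : ∑ k ∈ Finset.Ico 0 m,
          (if k < m then u else V ((List.ofFn (wmapX hdd a)).take (k + 1)) ω)
          = (m : ℝ) * u := by
        rw [Finset.sum_congr rfl (fun k hk => if_pos (Finset.mem_Ico.mp hk).2),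
          Finset.sum_const, Nat.card_Ico, nsmul_eq_mul]
        norm_num
      have hsecond : ∑ k ∈ Finset.Ico m (m + ℓ' + 1),
          (if k < m then u else V ((List.ofFn (wmapX hdd a)).take (k + 1)) ω)
          = ∑ k ∈ Finset.range l, V (emap hdd a k) ω := by
        rw [Finset.sum_congr rfl (fun k hk =>
          if_neg (by have := (Finset.mem_Ico.mp hk).1; omega)),
          Finset.sum_Ico_eq_sum_range]
        have hll : m + ℓ' + 1 - m = l := by omega
        rw [hll]
        exact Finset.sum_congr rfl (fun k hk => rfl)
      rw [hfirst, hsecond, hXalt a ω,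
        show β * ((m:ℝ) * u + ∑ k ∈ Finset.range l, V (emap hdd a k) ω)
          = β * u * (m:ℝ) + β * ∑ k ∈ Finset.range l, V (emap hdd a k) ω by ring,
        Real.exp_add]
    have hsub : ∑ w ∈ Finset.univ.image (wmapX hdd),
        Real.exp (β * ∑ k ∈ Finset.range (m + ℓ' + 1),
          (if ∀ x ∈ (List.ofFn w).take (k + 1), (x : ℕ) < d₁ then u
           else V ((List.ofFn w).take (k + 1)) ω))
        ≤ ∑ w : Fin (m + ℓ' + 1) → Fin d,
          Real.exp (β * ∑ k ∈ Finset.range (m + ℓ' + 1),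
          (if ∀ x ∈ (List.ofFn w).take (k + 1), (x : ℕ) < d₁ then u
           else V ((List.ofFn w).take (k + 1)) ω)) :=
      Finset.sum_le_sum_of_subset_of_nonneg (Finset.subset_univ _)
        (fun _ _ _ => (Real.exp_pos _).le)
    rw [Finset.sum_image (fun a _ a' _ h => wmapX_inj hdd h)] at hsub
    calc Real.exp (β * u * m) * S ω
        = ∑ a : PathIdx d d₁ m ℓ', Real.exp (β * u * m) * X a ω := by
          rw [hS]; rw [Finset.mul_sum]
      _ = ∑ a : PathIdx d d₁ m ℓ', Real.exp (β * ∑ k ∈ Finset.range (m + ℓ' + 1),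
            (if ∀ x ∈ (List.ofFn (wmapX hdd a)).take (k + 1), (x : ℕ) < d₁ then u
             else V ((List.ofFn (wmapX hdd a)).take (k + 1)) ω)) :=
          Finset.sum_congr rfl (fun a _ => (hstep1 a).symm)
      _ ≤ _ := hsub
  -- moments of S
  have intX : ∀ a, Integrable (X a) P := fun a => (hX1 a).2
  have intS : Integrable S P := integrable_finset_sum _ (fun a _ => intX a)
  have hES : ∫ ω, S ω ∂P = μS := by
    rw [hS]
    rw [integral_finset_sum _ (fun a _ => intX a),
      Finset.sum_congr rfl (fun a _ => (hX1 a).1), Finset.sum_const, Finset.card_univ,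
      nsmul_eq_mul, hcardA, hμS]
  have hSS : (fun ω => S ω * S ω)
      = fun ω => ∑ a : PathIdx d d₁ m ℓ', ∑ a' : PathIdx d d₁ m ℓ', X a ω * X a' ω := by
    funext ω
    rw [hS]
    rw [Finset.sum_mul_sum]
  have intS2 : Integrable (fun ω => S ω * S ω) P := by
    rw [hSS]
    exact integrable_finset_sum _ (fun a _ =>
      integrable_finset_sum _ (fun a' _ => (hXX a a').2))
  have hfib : ∀ a : PathIdx d d₁ m ℓ',
      ∑ a' : PathIdx d d₁ m ℓ', I2 ^ ((ssE hdd a ∩ ssE hdd a').card)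
        * I1 ^ (2 * l - 2 * (ssE hdd a ∩ ssE hdd a').card)
      ≤ AA * I1 ^ (2 * l) + (l : ℝ) * TT := by
    intro a
    have hmaps : ∀ a' ∈ (Finset.univ : Finset (PathIdx d d₁ m ℓ')),
        (ssE hdd a ∩ ssE hdd a').card ∈ Finset.range (l + 1) := fun a' _ =>
      Finset.mem_range.mpr (by have := ssE_card_le hdd a a'; omega)
    rw [← Finset.sum_fiberwise_of_maps_to hmaps (fun a' =>
      I2 ^ ((ssE hdd a ∩ ssE hdd a').card)
        * I1 ^ (2 * l - 2 * (ssE hdd a ∩ ssE hdd a').card))]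
    have hstep : ∀ j ∈ Finset.range (l + 1),
        (∑ a' ∈ (Finset.univ : Finset (PathIdx d d₁ m ℓ')).filter
            (fun a' => (ssE hdd a ∩ ssE hdd a').card = j),
          I2 ^ ((ssE hdd a ∩ ssE hdd a').card)
            * I1 ^ (2 * l - 2 * (ssE hdd a ∩ ssE hdd a').card))
        = (Finset.univ.filter
            (fun a' : PathIdx d d₁ m ℓ' => (ssE hdd a ∩ ssE hdd a').card = j)).card
          • (I2 ^ j * I1 ^ (2 * l - 2 * j)) := by
      intro j hj
      rw [Finset.sum_congr rfl (fun a' ha' => by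
        rw [(Finset.mem_filter.mp ha').2]), Finset.sum_const]
    rw [Finset.sum_congr rfl hstep, Finset.sum_range_succ']
    have hzero : (Finset.univ.filter
        (fun a' : PathIdx d d₁ m ℓ' => (ssE hdd a ∩ ssE hdd a').card = 0)).card
          • (I2 ^ 0 * I1 ^ (2 * l - 2 * 0)) ≤ AA * I1 ^ (2 * l) := by
      rw [nsmul_eq_mul, pow_zero, one_mul, Nat.mul_zero, Nat.sub_zero]
      apply mul_le_mul_of_nonneg_right _ (by positivity)
      rw [← hcardA, ← Finset.card_univ]
      exact_mod_cast Nat.cast_le.mpr (Finset.card_filter_le _ _)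
    have hrest : ∑ i ∈ Finset.range l, (Finset.univ.filter
        (fun a' : PathIdx d d₁ m ℓ' => (ssE hdd a ∩ ssE hdd a').card = i + 1)).card
          • (I2 ^ (i + 1) * I1 ^ (2 * l - 2 * (i + 1)))
        ≤ (l : ℝ) * TT := by
      have hone : ∀ i ∈ Finset.range l, (Finset.univ.filter
          (fun a' : PathIdx d d₁ m ℓ' => (ssE hdd a ∩ ssE hdd a').card = i + 1)).card
            • (I2 ^ (i + 1) * I1 ^ (2 * l - 2 * (i + 1))) ≤ TT := by
        intro i hi
        rw [Finset.mem_range] at hi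
        have hcnt := count_fiber hdd a (j := i + 1) (by omega) (by omega)
        have hcast : ((Finset.univ.filter
            (fun a' : PathIdx d d₁ m ℓ' => (ssE hdd a ∩ ssE hdd a').card = i + 1)).card : ℝ)
            ≤ (d : ℝ) ^ (l - (i + 1)) := by
          rw [hl]
          exact_mod_cast hcnt
        rw [nsmul_eq_mul]
        calc ((Finset.univ.filter
            (fun a' : PathIdx d d₁ m ℓ' => (ssE hdd a ∩ ssE hdd a').card = i + 1)).card : ℝ)
              * (I2 ^ (i + 1) * I1 ^ (2 * l - 2 * (i + 1)))
            ≤ (d : ℝ) ^ (l - (i + 1)) * (I2 ^ (i + 1) * I1 ^ (2 * l - 2 * (i + 1))) :=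
              mul_le_mul_of_nonneg_right hcast (by positivity)
          _ ≤ (d : ℝ) ^ l * q ^ l * I1 ^ (2 * l) :=
              term_bound hdR1 hI1pos hI2pos.le hq1 hq2 (by omega)
          _ = TT := by rw [hTT]
      calc ∑ i ∈ Finset.range l, (Finset.univ.filter
          (fun a' : PathIdx d d₁ m ℓ' => (ssE hdd a ∩ ssE hdd a').card = i + 1)).card
            • (I2 ^ (i + 1) * I1 ^ (2 * l - 2 * (i + 1)))
          ≤ (Finset.range l).card • TT := Finset.sum_le_card_nsmul _ _ _ hone
        _ = (l : ℝ) * TT := by rw [Finset.card_range, nsmul_eq_mul]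
    linarith [add_le_add hrest hzero]
  have hES2 : ∫ ω, S ω * S ω ∂P ≤ AA * (AA * I1 ^ (2 * l) + (l : ℝ) * TT) := by
    rw [hSS, integral_finset_sum _ (fun a _ =>
      integrable_finset_sum _ (fun a' _ => (hXX a a').2))]
    calc ∑ a : PathIdx d d₁ m ℓ', ∫ ω, (∑ a' : PathIdx d d₁ m ℓ', X a ω * X a' ω) ∂P
        = ∑ a : PathIdx d d₁ m ℓ', ∑ a' : PathIdx d d₁ m ℓ',
            I2 ^ ((ssE hdd a ∩ ssE hdd a').card)
              * I1 ^ (2 * l - 2 * (ssE hdd a ∩ ssE hdd a').card) := by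
          refine Finset.sum_congr rfl (fun a _ => ?_)
          rw [integral_finset_sum _ (fun a' _ => (hXX a a').2)]
          exact Finset.sum_congr rfl (fun a' _ => (hXX a a').1)
      _ ≤ ∑ _a : PathIdx d d₁ m ℓ', (AA * I1 ^ (2 * l) + (l : ℝ) * TT) :=
          Finset.sum_le_sum (fun a _ => hfib a)
      _ = AA * (AA * I1 ^ (2 * l) + (l : ℝ) * TT) := by
          rw [Finset.sum_const, Finset.card_univ, nsmul_eq_mul, hcardA]
  have hvar_eq : (fun ω => (S ω - μS) ^ 2)
      = fun ω => S ω * S ω - (2 * μS) * S ω + μS ^ 2 := by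
    funext ω; ring
  have hvar_int : Integrable (fun ω => (S ω - μS) ^ 2) P := by
    rw [hvar_eq]
    exact (intS2.sub (intS.const_mul (2 * μS))).add (integrable_const _)
  have hI1sq : (I1 ^ l) ^ 2 = I1 ^ (2 * l) := by
    rw [← pow_mul, Nat.mul_comm]
  have hvar : ∫ ω, (S ω - μS) ^ 2 ∂P ≤ AA * ((l : ℝ) * TT) := by
    have h2int : Integrable (fun ω => 2 * μS * S ω) P := intS.const_mul (2 * μS)
    have h1int : Integrable (fun ω => S ω * S ω - 2 * μS * S ω) P := intS2.sub h2int
    rw [hvar_eq, integral_add h1int (integrable_const _),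
      integral_sub intS2 h2int, integral_const_mul, hES,
      integral_const, probReal_univ, one_smul]
    have : μS ^ 2 = AA * (AA * I1 ^ (2 * l)) := by
      rw [hμS, mul_pow, ← hI1sq]; ring
    nlinarith [hES2]
  -- Chebyshev
  have hsubset : {ω | S ω ≤ μS / 2} ⊆ {ω | (μS / 2) ^ 2 ≤ (S ω - μS) ^ 2} := by
    intro ω hω
    simp only [Set.mem_setOf_eq] at hω ⊢
    have h1 : μS / 2 ≤ μS - S ω := by linarith
    calc (μS / 2) ^ 2 ≤ (μS - S ω) ^ 2 := pow_le_pow_left₀ (by positivity) h1 2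
      _ = (S ω - μS) ^ 2 := by ring
  have hmark := mul_meas_ge_le_integral_of_nonneg (μ := P)
    (f := fun ω => (S ω - μS) ^ 2)
    (Filter.Eventually.of_forall (fun ω => sq_nonneg _)) hvar_int ((μS / 2) ^ 2)
  have hPB : (P {ω | S ω ≤ μS / 2}).toReal ≤ AA * ((l : ℝ) * TT) / (μS / 2) ^ 2 := by
    have h2 : (P {ω | S ω ≤ μS / 2}).toReal
        ≤ (P {x | (μS / 2) ^ 2 ≤ (S x - μS) ^ 2}).toReal :=
      ENNReal.toReal_mono (measure_ne_top _ _) (measure_mono hsubset)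
    rw [le_div_iff₀ (by positivity)]
    calc (P {ω | S ω ≤ μS / 2}).toReal * (μS / 2) ^ 2
        ≤ (P {x | (μS / 2) ^ 2 ≤ (S x - μS) ^ 2}).toReal * (μS / 2) ^ 2 :=
          mul_le_mul_of_nonneg_right h2 (by positivity)
      _ = (μS / 2) ^ 2 * (P {x | (μS / 2) ^ 2 ≤ (S x - μS) ^ 2}).toReal := by ring
      _ ≤ ∫ ω, (S ω - μS) ^ 2 ∂P := hmark
      _ ≤ AA * ((l : ℝ) * TT) := hvar
  have hfinal : AA * ((l : ℝ) * TT) / (μS / 2) ^ 2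
      ≤ 4 * d * (ℓ' + 1) * q ^ (ℓ' + 1) / (d₁ : ℝ) ^ m := by
    have hkey : (d : ℝ) ^ l * (d₁ : ℝ) ^ m ≤ (d : ℝ) * AA := by
      have h1 : (1 : ℝ) ≤ ((d - d₁ : ℕ) : ℝ) := by
        have : 1 ≤ d - d₁ := by omega
        exact_mod_cast this
      calc (d : ℝ) ^ l * (d₁ : ℝ) ^ m = ((d : ℝ) ^ l * (d₁ : ℝ) ^ m) * 1 := (mul_one _).symm
        _ ≤ ((d : ℝ) ^ l * (d₁ : ℝ) ^ m) * ((d - d₁ : ℕ) : ℝ) :=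
            mul_le_mul_of_nonneg_left h1 (by positivity)
        _ = (d : ℝ) * AA := by rw [hAA, hl, pow_succ]; ring
    rw [div_le_div_iff₀ (by positivity) (by positivity)]
    have hq0 : (0:ℝ) < q := lt_of_lt_of_le one_pos hq1
    calc AA * ((l : ℝ) * TT) * (d₁ : ℝ) ^ m
        = ((l : ℝ) * q ^ l * I1 ^ (2 * l) * AA) * ((d : ℝ) ^ l * (d₁ : ℝ) ^ m) := by
          rw [hTT]; ring
      _ ≤ ((l : ℝ) * q ^ l * I1 ^ (2 * l) * AA) * ((d : ℝ) * AA) := by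
          apply mul_le_mul_of_nonneg_left hkey
          positivity
      _ = 4 * d * (l : ℝ) * q ^ l * ((AA * I1 ^ l / 2) ^ 2) := by
          rw [div_pow, mul_pow, ← hI1sq]; ring
      _ = 4 * d * (ℓ' + 1) * q ^ (ℓ' + 1) * (μS / 2) ^ 2 := by
          rw [hμS, hl]; push_cast; ring
  refine ⟨S, hSmeas, hZv, ?_⟩
  have hPB2 : (P {ω | S ω ≤ μS / 2}).toReal
      ≤ 4 * d * (ℓ' + 1) * q ^ (ℓ' + 1) / (d₁ : ℝ) ^ m := hPB.trans hfinal
  calc P {ω | S ω ≤ ((d₁ : ℝ) ^ m * ((d - d₁ : ℕ) : ℝ) * (d : ℝ) ^ ℓ' * I1 ^ (ℓ' + 1)) / 2}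
      = ENNReal.ofReal ((P {ω | S ω ≤ μS / 2}).toReal) := by
        rw [ENNReal.ofReal_toReal (measure_ne_top _ _)]
    _ ≤ ENNReal.ofReal (4 * d * (ℓ' + 1) * q ^ (ℓ' + 1) / (d₁ : ℝ) ^ m) :=
        ENNReal.ofReal_le_ofReal hPB2
end PerN


set_option maxHeartbeats 2000000 in
open Topology in
/-- **Lemma 2.7** (interpolated lower bound via a second-moment argument).
Let `β > 0`, `Θ := max {d²e^{2λ(β)}, d e^{λ(2β)}}`, and let `t ∈ (0,1)` satisfy
`(Θ/(d² e^{2λ(β)}))^{1−t} < d₁^t`. Then for every `u`, almost surely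
`liminf (1/n) log Z_n^{ST}(β,u) ≥ (1−t)(λ(β) + log d) + t(βu + log d₁)`. -/
theorem subtree_interpolated_lower_bound
    {Ω : Type*} [MeasurableSpace Ω] (P : Measure Ω) [IsProbabilityMeasure P]
    (d d₁ : ℕ) (hd : 2 ≤ d) (hd₁ : 1 ≤ d₁) (hd₁d : d₁ < d)
    -- the i.i.d. bulk disorder, indexed by the nonempty lists over `Fin d`
    (V : List (Fin d) → Ω → ℝ) (V0 : Ω → ℝ)
    (hmeas : ∀ x, Measurable (V x)) (hmeas0 : Measurable V0)
    (hindep : iIndepFun V P)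
    (hident : ∀ x : List (Fin d), x ≠ [] → Measure.map (V x) P = Measure.map V0 P)
    -- the cumulant generating function `λ`, finite everywhere
    (lam : ℝ → ℝ)
    (hint : ∀ β : ℝ, Integrable (fun ω => Real.exp (β * V0 ω)) P)
    (hlam : ∀ β : ℝ, lam β = Real.log (∫ ω, Real.exp (β * V0 ω) ∂P))
    -- the partition function of the subtree-defect model
    (Z : ℕ → ℝ → ℝ → Ω → ℝ)
    (hZ : ∀ (n : ℕ) (β u : ℝ) (ω : Ω), Z n β u ω =
      ∑ w : Fin n → Fin d, Real.exp (β * ∑ k ∈ Finset.range n,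
        (if ∀ a ∈ (List.ofFn w).take (k + 1), (a : ℕ) < d₁ then u
         else V ((List.ofFn w).take (k + 1)) ω)))
    (β : ℝ) (hβ : 0 < β)
    (Θ : ℝ) (hΘ : Θ = max ((d : ℝ) ^ 2 * Real.exp (2 * lam β)) ((d : ℝ) * Real.exp (lam (2 * β))))
    (t : ℝ) (ht₀ : 0 < t) (ht₁ : t < 1)
    (ht : (Θ / ((d : ℝ) ^ 2 * Real.exp (2 * lam β))) ^ (1 - t) < (d₁ : ℝ) ^ t)
    (u : ℝ) :
    ∀ᵐ ω ∂P, (1 - t) * (lam β + Real.log d) + t * (β * u + Real.log d₁) ≤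
      (Filter.liminf (fun n : ℕ => (1 / (n : ℝ)) * Real.log (Z n β u ω)) Filter.atTop) := by
  classical
  set I1 : ℝ := ∫ ω, Real.exp (β * V0 ω) ∂P with hI1def
  set I2 : ℝ := ∫ ω, Real.exp (2 * β * V0 ω) ∂P with hI2def
  have hI1pos : 0 < I1 := by rw [hI1def]; simpa [mgf] using mgf_pos (X := V0) (μ := P) (hint β)
  have hI2pos : 0 < I2 := by
    rw [hI2def]; simpa [mgf] using mgf_pos (X := V0) (μ := P) (hint (2 * β))
  have hlamβ : Real.exp (lam β) = I1 := by rw [hlam β]; exact Real.exp_log hI1pos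
  have hlam2β : Real.exp (lam (2 * β)) = I2 := by rw [hlam (2 * β)]; exact Real.exp_log hI2pos
  have hexp2 : Real.exp (2 * lam β) = I1 ^ 2 := by rw [two_mul, Real.exp_add, hlamβ, sq]
  have hdR : (0:ℝ) < (d : ℝ) := by positivity
  have hdR2 : (0:ℝ) < (d : ℝ) ^ 2 * I1 ^ 2 := by positivity
  set q : ℝ := Θ / ((d : ℝ) ^ 2 * I1 ^ 2) with hqdef
  have hΘ' : Θ = max ((d : ℝ) ^ 2 * I1 ^ 2) ((d : ℝ) * I2) := by rw [hΘ, hexp2, hlam2β]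
  have hq1 : 1 ≤ q := by
    rw [hqdef, le_div_iff₀ hdR2, one_mul, hΘ']
    exact le_max_left _ _
  have hqpos : (0:ℝ) < q := lt_of_lt_of_le one_pos hq1
  have hq2 : I2 ≤ (d : ℝ) * I1 ^ 2 * q := by
    have h1 : (d : ℝ) * I2 ≤ Θ := by rw [hΘ']; exact le_max_right _ _
    rw [hqdef]
    rw [show (d : ℝ) * I1 ^ 2 * (Θ / ((d : ℝ) ^ 2 * I1 ^ 2)) = Θ / d by
      field_simp]
    rw [le_div_iff₀ hdR]
    linarith [h1]
  have hd₁R1 : (1:ℝ) ≤ (d₁ : ℝ) := by exact_mod_cast hd₁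
  have hd₁pos : (0:ℝ) < (d₁ : ℝ) := lt_of_lt_of_le one_pos hd₁R1
  have hlogq : 0 ≤ Real.log q := Real.log_nonneg hq1
  have hlogd₁ : 0 ≤ Real.log d₁ := Real.log_nonneg hd₁R1
  have htlog : (1 - t) * Real.log q < t * Real.log d₁ := by
    have hbase : Θ / ((d : ℝ) ^ 2 * Real.exp (2 * lam β)) = q := by rw [hexp2, hqdef]
    rw [hbase] at ht
    have h1 : Real.log (q ^ (1 - t)) < Real.log ((d₁ : ℝ) ^ t) :=
      Real.log_lt_log (Real.rpow_pos_of_pos hqpos _) ht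
    rwa [Real.log_rpow hqpos, Real.log_rpow hd₁pos] at h1
  set δ : ℝ := t * Real.log d₁ - (1 - t) * Real.log q with hδdef
  have hδpos : 0 < δ := by rw [hδdef]; linarith
  have h1t : (0:ℝ) < 1 - t := by linarith
  set N₀ : ℕ := max 1 ⌈2 / (1 - t)⌉₊ with hN₀def
  set mfun : ℕ → ℕ := fun n => ⌈t * n⌉₊ with hmfundef
  have hmlt : ∀ n : ℕ, N₀ ≤ n → mfun n < n := by
    intro n hn
    have h2 : 2 / (1 - t) ≤ (n : ℝ) := by
      calc 2 / (1 - t) ≤ (⌈2 / (1 - t)⌉₊ : ℝ) := Nat.le_ceil _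
        _ ≤ (N₀ : ℝ) := by exact_mod_cast le_max_right _ _
        _ ≤ (n : ℝ) := by exact_mod_cast hn
    have h3 : (2:ℝ) ≤ (1 - t) * n := by rw [div_le_iff₀ h1t] at h2; linarith
    have h4 : (mfun n : ℝ) < t * n + 1 := Nat.ceil_lt_add_one (by positivity)
    have h5 : (mfun n : ℝ) < (n : ℝ) := by nlinarith
    exact_mod_cast h5
  have hmge : ∀ n : ℕ, t * n ≤ mfun n := fun n => Nat.le_ceil _
  set μfun : ℕ → ℝ := fun n => (d₁ : ℝ) ^ (mfun n) * ((d - d₁ : ℕ) : ℝ)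
      * (d : ℝ) ^ (n - mfun n - 1) * I1 ^ (n - mfun n) with hμfundef
  have key : ∀ n : ℕ, ∃ S : Ω → ℝ, Measurable S ∧ (N₀ ≤ n →
      (∀ ω, Real.exp (β * u * (mfun n)) * S ω ≤ Z n β u ω) ∧
      P {ω | S ω ≤ μfun n / 2}
        ≤ ENNReal.ofReal (4 * d * n * Real.exp (-δ * n))) := by
    intro n
    by_cases hn : N₀ ≤ n
    · obtain ⟨S, hSmeas, hZv, hPB⟩ := per_n P d d₁ hd hd₁ hd₁d V V0 hmeas hmeas0 hindep
        hident hint β u I1 I2 q hI1def hI2def hI1pos hI2pos hq1 hq2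
        (mfun n) (n - mfun n - 1)
      have hmn := hmlt n hn
      have hidx : mfun n + (n - mfun n - 1) + 1 = n := by omega
      have hidx2 : (n - mfun n - 1) + 1 = n - mfun n := by omega
      rw [hidx2] at hPB
      refine ⟨S, hSmeas, fun _ => ⟨?_, ?_⟩⟩
      · intro ω
        rw [hZ n β u ω]
        have h := hZv ω
        rw [hidx] at h
        exact h
      · refine hPB.trans (ENNReal.ofReal_le_ofReal ?_)
        have hc1 : ((n - mfun n - 1 : ℕ) : ℝ) + 1 = ((n - mfun n : ℕ) : ℝ) := by
          exact_mod_cast congrArg (Nat.cast : ℕ → ℝ) hidx2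
        have hqd : q ^ (n - mfun n) / (d₁ : ℝ) ^ (mfun n) ≤ Real.exp (-δ * n) := by
          have e1 : q ^ (n - mfun n) = Real.exp (((n - mfun n : ℕ) : ℝ) * Real.log q) := by
            rw [Real.exp_nat_mul, Real.exp_log hqpos]
          have e2 : (d₁ : ℝ) ^ (mfun n) = Real.exp (((mfun n : ℕ) : ℝ) * Real.log d₁) := by
            rw [Real.exp_nat_mul, Real.exp_log hd₁pos]
          rw [e1, e2, ← Real.exp_sub]
          apply Real.exp_le_exp.mpr
          have hc2 : ((n - mfun n : ℕ) : ℝ) = (n : ℝ) - (mfun n : ℝ) :=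
            by exact_mod_cast Nat.cast_sub (le_of_lt hmn)
          have hM : t * n ≤ (mfun n : ℝ) := hmge n
          have hup1 : ((n - mfun n : ℕ) : ℝ) * Real.log q ≤ (1 - t) * n * Real.log q := by
            apply mul_le_mul_of_nonneg_right _ hlogq
            rw [hc2]; linarith
          have hup2 : t * n * Real.log d₁ ≤ (mfun n : ℝ) * Real.log d₁ :=
            mul_le_mul_of_nonneg_right hM hlogd₁
          rw [hδdef]
          nlinarith
        have hLn : ((n - mfun n - 1 : ℕ) : ℝ) + 1 ≤ (n : ℝ) := by
          rw [hc1]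
          exact_mod_cast Nat.sub_le n (mfun n)
        calc 4 * (d : ℝ) * (((n - mfun n - 1 : ℕ) : ℝ) + 1) * q ^ (n - mfun n)
              / (d₁ : ℝ) ^ (mfun n)
            = (4 * d * (((n - mfun n - 1 : ℕ) : ℝ) + 1))
                * (q ^ (n - mfun n) / (d₁ : ℝ) ^ (mfun n)) := by ring
          _ ≤ (4 * d * n) * Real.exp (-δ * n) := by
              apply mul_le_mul _ hqd (by positivity) (by positivity)
              apply mul_le_mul_of_nonneg_left hLn (by positivity)
          _ = 4 * d * n * Real.exp (-δ * n) := by ring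
    · exact ⟨fun _ => 0, measurable_const, fun h => absurd h hn⟩
  choose SS hSSmeas hSSkey using key
  set bad : ℕ → Set Ω := fun n => if N₀ ≤ n then {ω | SS n ω ≤ μfun n / 2} else ∅ with hbaddef
  have hble : ∀ n, P (bad n) ≤ ENNReal.ofReal (4 * d * n * Real.exp (-δ * n)) := by
    intro n
    by_cases hn : N₀ ≤ n
    · rw [hbaddef]; simp only [if_pos hn]; exact (hSSkey n hn).2
    · rw [hbaddef]; simp only [if_neg hn, measure_empty]; exact zero_le
  have hsummable : Summable (fun n : ℕ => 4 * (d:ℝ) * n * Real.exp (-δ * n)) := by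
    have hr : Real.exp (-δ) < 1 := by
      rw [Real.exp_lt_one_iff]
      linarith
    have h0 : Summable (fun n : ℕ => (n : ℝ) ^ 1 * (Real.exp (-δ)) ^ n) :=
      summable_pow_mul_geometric_of_norm_lt_one 1
        (by rw [Real.norm_eq_abs, abs_of_pos (Real.exp_pos _)]; exact hr)
    have h1 : (fun n : ℕ => 4 * (d:ℝ) * n * Real.exp (-δ * n))
        = fun n : ℕ => (4 * (d:ℝ)) * ((n : ℝ) ^ 1 * (Real.exp (-δ)) ^ n) := by
      funext n
      rw [show -δ * (n:ℝ) = (n : ℕ) * (-δ) by push_cast; ring, Real.exp_nat_mul]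
      ring
    rw [h1]
    exact h0.mul_left _
  have hsum : (∑' n, P (bad n)) ≠ ⊤ := by
    have h2 : (∑' n, P (bad n)) ≤ ∑' (n : ℕ), ENNReal.ofReal (4 * d * n * Real.exp (-δ * n)) :=
      ENNReal.tsum_le_tsum hble
    have h3 : ∑' (n : ℕ), ENNReal.ofReal (4 * (d:ℝ) * n * Real.exp (-δ * n))
        = ENNReal.ofReal (∑' (n : ℕ), 4 * (d:ℝ) * n * Real.exp (-δ * n)) :=
      (ENNReal.ofReal_tsum_of_nonneg (fun n => by positivity) hsummable).symm
    rw [h3] at h2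
    exact ne_top_of_le_ne_top ENNReal.ofReal_ne_top h2
  have hae := MeasureTheory.ae_eventually_notMem hsum
  -- first-moment upper bound machinery (for coboundedness of the liminf)
  set K : ℝ := max (Real.exp (β * u)) I1 with hKdef
  have hKpos : 0 < K := lt_of_lt_of_le (Real.exp_pos (β * u)) (le_max_left _ _)
  have hterm : ∀ (n : ℕ) (w : Fin n → Fin d),
      Integrable (fun ω => Real.exp (β * ∑ k ∈ Finset.range n,
        (if ∀ x ∈ (List.ofFn w).take (k + 1), (x : ℕ) < d₁ then u
         else V ((List.ofFn w).take (k + 1)) ω))) P ∧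
      (∫ ω, Real.exp (β * ∑ k ∈ Finset.range n,
        (if ∀ x ∈ (List.ofFn w).take (k + 1), (x : ℕ) < d₁ then u
         else V ((List.ofFn w).take (k + 1)) ω)) ∂P) ≤ K ^ n := by
    intro n w
    set cnd : ℕ → Prop := fun k => ∀ x ∈ (List.ofFn w).take (k + 1), (x : ℕ) < d₁ with hcnd
    set F : Finset ℕ := (Finset.range n).filter (fun k => ¬ cnd k) with hFdef
    set sEw : Finset (List (Fin d)) := F.image (fun k => (List.ofFn w).take (k + 1)) with hsEdef
    have hlen : ∀ k ∈ F, ((List.ofFn w).take (k + 1)).length = k + 1 := by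
      intro k hk
      rw [hFdef, Finset.mem_filter, Finset.mem_range] at hk
      simp [List.length_take]
      omega
    have hinj : ∀ k ∈ F, ∀ k' ∈ F, (List.ofFn w).take (k + 1) = (List.ofFn w).take (k' + 1)
        → k = k' := by
      intro k hk k' hk' h
      have h1 := hlen k hk
      have h2 := hlen k' hk'
      rw [h] at h1
      omega
    have hne : ∀ x ∈ sEw, x ≠ [] := by
      intro x hx
      rw [hsEdef, Finset.mem_image] at hx
      obtain ⟨k, hk, rfl⟩ := hx
      rw [← List.length_pos_iff_ne_nil, hlen k hk]
      omega
    have hM := aux_master P V V0 hmeas hmeas0 hindep hident hint (fun _ => β) sEw hne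
    have hsplit : ∀ ω, Real.exp (β * ∑ k ∈ Finset.range n,
        (if cnd k then u else V ((List.ofFn w).take (k + 1)) ω))
        = Real.exp (β * u * ((Finset.range n).filter cnd).card)
          * Real.exp (∑ x ∈ sEw, β * V x ω) := by
      intro ω
      rw [← Finset.sum_filter_add_sum_filter_not (Finset.range n) cnd]
      have e1 : ∑ k ∈ (Finset.range n).filter cnd,
          (if cnd k then u else V ((List.ofFn w).take (k + 1)) ω)
          = ((Finset.range n).filter cnd).card * u := by
        rw [Finset.sum_congr rfl (fun k hk => if_pos (Finset.mem_filter.mp hk).2),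
          Finset.sum_const, nsmul_eq_mul]
      have e2 : ∑ k ∈ (Finset.range n).filter (fun k => ¬ cnd k),
          (if cnd k then u else V ((List.ofFn w).take (k + 1)) ω)
          = ∑ x ∈ sEw, V x ω := by
        rw [Finset.sum_congr rfl (fun k hk => if_neg (Finset.mem_filter.mp hk).2),
          hsEdef, Finset.sum_image hinj]
      rw [e1, e2, ← Real.exp_add]
      congr 1
      rw [mul_add, Finset.mul_sum]
      ring
    constructor
    · apply (integrable_congr (Filter.Eventually.of_forall (fun ω => (hsplit ω).symm))).mp
      exact (hM.2.const_mul _)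
    · have hIeq : ∫ ω, Real.exp (β * ∑ k ∈ Finset.range n,
          (if cnd k then u else V ((List.ofFn w).take (k + 1)) ω)) ∂P
          = Real.exp (β * u * ((Finset.range n).filter cnd).card)
            * (∫ ω, Real.exp (∑ x ∈ sEw, β * V x ω) ∂P) := by
        rw [integral_congr_ae (Filter.Eventually.of_forall hsplit), integral_const_mul]
      rw [hIeq, hM.1, Finset.prod_const]
      have hcardim : sEw.card = F.card := by
        rw [hsEdef]
        exact Finset.card_image_of_injOn hinj
      have hcards : ((Finset.range n).filter cnd).card + F.card = n := by
        rw [hFdef]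
        rw [Finset.card_filter_add_card_filter_not, Finset.card_range]
      have hb1 : Real.exp (β * u * ((Finset.range n).filter cnd).card)
          ≤ K ^ ((Finset.range n).filter cnd).card := by
        rw [show β * u * (((Finset.range n).filter cnd).card : ℝ)
            = (((Finset.range n).filter cnd).card : ℕ) * (β * u) by push_cast; ring,
          Real.exp_nat_mul]
        exact pow_le_pow_left₀ (Real.exp_pos _).le (le_max_left _ _) _
      have hb2 : (∫ ω, Real.exp (β * V0 ω) ∂P) ^ sEw.card ≤ K ^ sEw.card := by
        apply pow_le_pow_left₀ hI1pos.le
        exact le_max_right _ _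
      calc Real.exp (β * u * ((Finset.range n).filter cnd).card)
            * (∫ ω, Real.exp (β * V0 ω) ∂P) ^ sEw.card
          ≤ K ^ ((Finset.range n).filter cnd).card * K ^ sEw.card := by
            apply mul_le_mul hb1 hb2 (by positivity) (by positivity)
        _ = K ^ n := by rw [← pow_add, hcardim, hcards]
  have hNE : ∀ n : ℕ, Nonempty (Fin n → Fin d) := fun n => ⟨fun _ => ⟨0, by omega⟩⟩
  have hZint : ∀ n : ℕ, Integrable (fun ω => Z n β u ω) P := by
    intro n
    apply (integrable_congr (Filter.Eventually.of_forall
      (fun ω => (hZ n β u ω).symm))).mp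
    exact integrable_finset_sum _ (fun w _ => (hterm n w).1)
  have hEZ : ∀ n : ℕ, (∫ ω, Z n β u ω ∂P) ≤ (d : ℝ) ^ n * K ^ n := by
    intro n
    rw [integral_congr_ae (Filter.Eventually.of_forall (fun ω => hZ n β u ω)),
      integral_finset_sum _ (fun w _ => (hterm n w).1)]
    calc ∑ w : Fin n → Fin d, ∫ ω, Real.exp (β * ∑ k ∈ Finset.range n,
          (if ∀ x ∈ (List.ofFn w).take (k + 1), (x : ℕ) < d₁ then u
           else V ((List.ofFn w).take (k + 1)) ω)) ∂P
        ≤ ∑ _w : Fin n → Fin d, K ^ n := Finset.sum_le_sum (fun w _ => (hterm n w).2)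
      _ = (d : ℝ) ^ n * K ^ n := by
          rw [Finset.sum_const, Finset.card_univ, nsmul_eq_mul]
          congr 1
          simp [Fintype.card_fun]
  have hZpos : ∀ (n : ℕ) (ω : Ω), 0 < Z n β u ω := by
    intro n ω
    rw [hZ n β u ω]
    have := hNE n
    exact Finset.sum_pos (fun w _ => Real.exp_pos _) Finset.univ_nonempty
  set bad2 : ℕ → Set Ω := fun n =>
    {ω | ((d : ℝ) * K * Real.exp 1) ^ n ≤ Z n β u ω} with hbad2def
  have hble2 : ∀ n : ℕ, P (bad2 n) ≤ ENNReal.ofReal (Real.exp (-1) ^ n) := by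
    intro n
    have hεpos : (0:ℝ) < ((d : ℝ) * K * Real.exp 1) ^ n := by positivity
    have hmark := mul_meas_ge_le_integral_of_nonneg (μ := P)
      (f := fun ω => Z n β u ω)
      (Filter.Eventually.of_forall (fun ω => (hZpos n ω).le)) (hZint n)
      (((d : ℝ) * K * Real.exp 1) ^ n)
    have h1 : (P (bad2 n)).toReal ≤ Real.exp (-1) ^ n := by
      have h2 : ((d : ℝ) * K * Real.exp 1) ^ n * (P (bad2 n)).toReal
          ≤ (d : ℝ) ^ n * K ^ n := le_trans hmark (hEZ n)
      have h3 : (d : ℝ) ^ n * K ^ n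
          = Real.exp (-1) ^ n * ((d : ℝ) * K * Real.exp 1) ^ n := by
        rw [Real.exp_neg, mul_pow, mul_pow, inv_pow]
        field_simp
      rw [h3, mul_comm (Real.exp (-1) ^ n) _] at h2
      exact (mul_le_mul_iff_right₀ hεpos).mp h2
    calc P (bad2 n) = ENNReal.ofReal ((P (bad2 n)).toReal) :=
          (ENNReal.ofReal_toReal (measure_ne_top _ _)).symm
      _ ≤ ENNReal.ofReal (Real.exp (-1) ^ n) := ENNReal.ofReal_le_ofReal h1
  have hsum2 : (∑' n, P (bad2 n)) ≠ ⊤ := by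
    have hrlt : Real.exp (-1) < 1 := by
      rw [Real.exp_lt_one_iff]; norm_num
    have hsummable2 : Summable (fun n : ℕ => Real.exp (-1) ^ n) :=
      summable_geometric_of_lt_one (Real.exp_pos _).le hrlt
    have h2 : (∑' n, P (bad2 n)) ≤ ∑' (n : ℕ), ENNReal.ofReal (Real.exp (-1) ^ n) :=
      ENNReal.tsum_le_tsum hble2
    have h3 : ∑' (n : ℕ), ENNReal.ofReal (Real.exp (-1) ^ n)
        = ENNReal.ofReal (∑' (n : ℕ), Real.exp (-1) ^ n) :=
      (ENNReal.ofReal_tsum_of_nonneg (fun n => by positivity) hsummable2).symm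
    rw [h3] at h2
    exact ne_top_of_le_ne_top ENNReal.ofReal_ne_top h2
  have hae2 := MeasureTheory.ae_eventually_notMem hsum2
  have hctend : Tendsto (fun n : ℕ => (mfun n : ℝ) / n) atTop (𝓝 t) := by
    have hlow : ∀ᶠ n : ℕ in atTop, t ≤ (mfun n : ℝ) / n := by
      filter_upwards [eventually_ge_atTop 1] with n hn
      have hn0 : (0:ℝ) < n := by exact_mod_cast hn
      rw [le_div_iff₀ hn0]
      have := hmge n
      linarith
    have hhigh : ∀ᶠ n : ℕ in atTop, (mfun n : ℝ) / n ≤ t + 1 / n := by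
      filter_upwards [eventually_ge_atTop 1] with n hn
      have hn0 : (0:ℝ) < n := by exact_mod_cast hn
      rw [div_le_iff₀ hn0]
      have hceil := Nat.ceil_lt_add_one (by positivity : (0:ℝ) ≤ t * n)
      have : (mfun n : ℝ) < t * n + 1 := by exact_mod_cast hceil
      have heq : (t + 1 / n) * n = t * n + 1 := by field_simp
      linarith
    have hht : Tendsto (fun n : ℕ => t + 1 / (n : ℝ)) atTop (𝓝 t) := by
      have h0 := tendsto_one_div_atTop_nhds_zero_nat (𝕜 := ℝ)
      simpa using (tendsto_const_nhds (x := t) (f := atTop)).add h0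
    exact tendsto_of_tendsto_of_tendsto_of_le_of_le' tendsto_const_nhds hht hlow hhigh
  set L : ℝ := (1 - t) * (lam β + Real.log d) + t * (β * u + Real.log d₁) with hLdef
  set C0 : ℝ := Real.log ((d - d₁ : ℕ) : ℝ) - Real.log d - Real.log 2 with hC0def
  set g : ℕ → ℝ := fun n => ((mfun n : ℝ) / n) * (β * u + Real.log d₁)
      + (1 - (mfun n : ℝ) / n) * (lam β + Real.log d) + (1 / (n : ℝ)) * C0 with hgdef
  have hgtend : Tendsto g atTop (𝓝 L) := by
    have h1 : Tendsto (fun n : ℕ => ((mfun n : ℝ) / n) * (β * u + Real.log d₁)) atTop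
        (𝓝 (t * (β * u + Real.log d₁))) := hctend.mul_const _
    have h2 : Tendsto (fun n : ℕ => (1 - (mfun n : ℝ) / n) * (lam β + Real.log d)) atTop
        (𝓝 ((1 - t) * (lam β + Real.log d))) := (tendsto_const_nhds.sub hctend).mul_const _
    have h3 : Tendsto (fun n : ℕ => (1 / (n : ℝ)) * C0) atTop (𝓝 0) := by
      simpa using tendsto_one_div_atTop_nhds_zero_nat.mul_const C0
    have hfin := (h1.add h2).add h3
    have hLeq : t * (β * u + Real.log d₁) + (1 - t) * (lam β + Real.log d) + 0 = L := by
      rw [hLdef]; ring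
    rw [← hLeq]
    exact hfin
  filter_upwards [hae, hae2] with ω hω hω2
  have hub : ∀ᶠ n : ℕ in atTop, (1 / (n : ℝ)) * Real.log (Z n β u ω)
      ≤ Real.log ((d : ℝ) * K * Real.exp 1) := by
    filter_upwards [hω2, eventually_ge_atTop 1] with n hn2 hn1
    have hZub : Z n β u ω ≤ ((d : ℝ) * K * Real.exp 1) ^ n := by
      by_contra hcon
      push_neg at hcon
      exact hn2 (le_of_lt hcon)
    have hn0 : (0:ℝ) < (n : ℝ) := by exact_mod_cast hn1
    have hlogZ : Real.log (Z n β u ω) ≤ (n : ℝ) * Real.log ((d : ℝ) * K * Real.exp 1) := by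
      rw [← Real.log_pow]
      exact Real.log_le_log (hZpos n ω) hZub
    rw [one_div, inv_mul_le_iff₀ hn0]
    exact hlogZ
  have hev : ∀ᶠ n : ℕ in atTop, g n ≤ (1 / (n : ℝ)) * Real.log (Z n β u ω) := by
    filter_upwards [hω, eventually_ge_atTop N₀, eventually_ge_atTop 1] with n hnb hnN hn1
    have hmn := hmlt n hnN
    have hnot : ¬ SS n ω ≤ μfun n / 2 := by
      intro hcon
      apply hnb
      rw [hbaddef]
      simp only [if_pos hnN]
      exact hcon
    push_neg at hnot
    have hZv := (hSSkey n hnN).1 ω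
    have hdd1R : (0:ℝ) < ((d - d₁ : ℕ) : ℝ) := by
      have : 0 < d - d₁ := by omega
      exact_mod_cast this
    have hμpos : 0 < μfun n := by rw [hμfundef]; positivity
    have hZlb : Real.exp (β * u * (mfun n)) * (μfun n / 2) ≤ Z n β u ω :=
      le_trans (mul_le_mul_of_nonneg_left (le_of_lt hnot) (Real.exp_pos _).le) hZv
    have hlog : Real.log (Real.exp (β * u * (mfun n)) * (μfun n / 2))
        ≤ Real.log (Z n β u ω) := Real.log_le_log (by positivity) hZlb
    have hloglam : Real.log I1 = lam β := by rw [hI1def]; exact (hlam β).symm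
    have hexpand : Real.log (Real.exp (β * u * (mfun n)) * (μfun n / 2))
        = β * u * (mfun n) + ((mfun n : ℝ) * Real.log d₁ + Real.log ((d - d₁ : ℕ) : ℝ)
          + ((n - mfun n - 1 : ℕ) : ℝ) * Real.log d
          + ((n - mfun n : ℕ) : ℝ) * lam β) - Real.log 2 := by
      rw [Real.log_mul (Real.exp_ne_zero _) (by positivity), Real.log_exp,
        Real.log_div (by positivity) two_ne_zero, hμfundef]
      simp only []
      rw [Real.log_mul (by positivity) (by positivity),
        Real.log_mul (by positivity) (by positivity),
        Real.log_mul (by positivity) (by positivity),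
        Real.log_pow, Real.log_pow, Real.log_pow, hloglam]
      push_cast
      ring
    have hn0 : (0:ℝ) < (n : ℝ) := by exact_mod_cast hn1
    have hc2 : ((n - mfun n : ℕ) : ℝ) = (n : ℝ) - (mfun n : ℝ) := by
      exact_mod_cast Nat.cast_sub (le_of_lt hmn)
    have hc1 : ((n - mfun n - 1 : ℕ) : ℝ) = (n : ℝ) - (mfun n : ℝ) - 1 := by
      rw [Nat.cast_sub (by omega : 1 ≤ n - mfun n), hc2]
      norm_num
    have hgn : g n = (1 / (n : ℝ)) * (β * u * (mfun n)
        + ((mfun n : ℝ) * Real.log d₁ + Real.log ((d - d₁ : ℕ) : ℝ)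
          + ((n - mfun n - 1 : ℕ) : ℝ) * Real.log d
          + ((n - mfun n : ℕ) : ℝ) * lam β) - Real.log 2) := by
      rw [hgdef, hC0def]
      simp only []
      rw [hc1, hc2]
      field_simp
      ring
    rw [hgn]
    exact mul_le_mul_of_nonneg_left (le_trans (le_of_eq hexpand.symm) hlog)
      (by positivity : (0:ℝ) ≤ 1 / (n : ℝ))
  refine le_of_forall_sub_le ?_
  intro ε hε
  have hevg : ∀ᶠ n in atTop, L - ε ≤ g n :=
    hgtend.eventually (eventually_ge_nhds (by linarith : L - ε < L))
  have hevf : ∀ᶠ n : ℕ in atTop, L - ε ≤ (1 / (n : ℝ)) * Real.log (Z n β u ω) := by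
    filter_upwards [hevg, hev] with n h1 h2
    exact h1.trans h2
  exact le_liminf_of_le (Filter.IsCoboundedUnder.of_frequently_le hub.frequently) hevf
end

section
/- For every β ∈ ℝ and every n ≥ 1, E[(Z_n^{HD}(β))²] = dⁿ·( Σ_{k=0}^{n−1} (d−1)·d^{n−k−1}·e^{k·λ(2β)}·e^{2(n−k)·λ(β)} + e^{n·λ(2β)} ). (Explicit second-moment formula for the homogeneous partition function, from the proof of Lemma 2.6.) -/
open MeasureTheory ProbabilityTheory

section Aux

variable {Ω : Type*} [MeasurableSpace Ω] {P : Measure Ω}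

/-- Factorization of the integral of a product of independent random variables over a finset. -/
lemma aux_prod_integral [IsProbabilityMeasure P] {ι : Type*} {f : ι → Ω → ℝ}
    (hmeas : ∀ x, Measurable (f x))
    (hindep : iIndepFun f P) :
    ∀ S : Finset ι, (∀ x ∈ S, Integrable (f x) P) →
      Integrable (fun ω => ∏ x ∈ S, f x ω) P ∧
        ∫ ω, ∏ x ∈ S, f x ω ∂P = ∏ x ∈ S, ∫ ω, f x ω ∂P := by
  classical
  intro S
  induction S using Finset.induction_on with
  | empty =>
    intro _
    constructor
    · simpa using (integrable_const (1 : ℝ) : Integrable (fun _ : Ω => (1:ℝ)) P)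
    · simp
  | @insert a S ha ih =>
    intro hint
    have h1 : Integrable (f a) P := hint a (Finset.mem_insert_self a S)
    obtain ⟨h2int, h2eq⟩ := ih fun x hx => hint x (Finset.mem_insert_of_mem hx)
    have hind : IndepFun (∏ x ∈ S, f x) (f a) P :=
      hindep.indepFun_finset_prod_of_notMem hmeas ha
    have hfun : (∏ x ∈ S, f x) = fun ω => ∏ x ∈ S, f x ω := by
      funext ω; exact Finset.prod_apply ω S f
    rw [hfun] at hind
    have hintmul : Integrable (fun ω => (∏ x ∈ S, f x ω) * f a ω) P :=
      hind.integrable_mul h2int h1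
    have heqmul : ∫ ω, (∏ x ∈ S, f x ω) * f a ω ∂P
        = (∫ ω, ∏ x ∈ S, f x ω ∂P) * ∫ ω, f a ω ∂P :=
      hind.integral_mul_eq_mul_integral h2int.aestronglyMeasurable h1.aestronglyMeasurable
    have hpt : (fun ω => ∏ x ∈ insert a S, f x ω)
        = fun ω => (∏ x ∈ S, f x ω) * f a ω := by
      funext ω; rw [Finset.prod_insert ha, mul_comm]
    constructor
    · rw [hpt]; exact hintmul
    · rw [hpt, heqmul, h2eq, Finset.prod_insert ha, mul_comm]

/-- Telescoping identity. -/
lemma aux_tele (g : ℕ → ℝ) {m n : ℕ} (hmn : m ≤ n) :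
    g m = g 0 + ∑ k ∈ Finset.range n, (if k < m then g (k + 1) - g k else 0) := by
  classical
  have hfil : Finset.filter (fun k => k < m) (Finset.range n) = Finset.range m := by
    ext k; simp only [Finset.mem_filter, Finset.mem_range]; omega
  rw [Finset.sum_ite, Finset.sum_const_zero, add_zero, hfil, Finset.sum_range_sub g]
  ring

/-- Abel-type summation algebra. -/
lemma aux_abel (n : ℕ) (d : ℝ) (g : ℕ → ℝ) :
    d ^ n * (d ^ n * g 0) + ∑ k ∈ Finset.range n, d ^ n * (d ^ (n - (k + 1)) * (g (k + 1) - g k))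
      = d ^ n * ((∑ k ∈ Finset.range n, (d - 1) * d ^ (n - k - 1) * g k) + g n) := by
  classical
  have hsplit : ∀ k ∈ Finset.range n,
      d ^ (n - (k + 1)) * (g (k + 1) - g k)
        = (d ^ (n - (k + 1)) * g (k + 1) - d ^ (n - k) * g k)
            + (d - 1) * d ^ (n - k - 1) * g k := by
    intro k hk
    rw [Finset.mem_range] at hk
    have h1 : n - (k + 1) = n - k - 1 := by omega
    have h2 : d ^ (n - k) = d ^ (n - k - 1) * d := by
      rw [← pow_succ]; congr 1; omega
    rw [h1, h2]; ring
  rw [Finset.sum_congr rfl fun k hk => congrArg (fun z => d ^ n * z) (hsplit k hk)]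
  have : ∑ k ∈ Finset.range n, d ^ n *
      ((d ^ (n - (k + 1)) * g (k + 1) - d ^ (n - k) * g k) + (d - 1) * d ^ (n - k - 1) * g k)
      = (∑ k ∈ Finset.range n,
          (d ^ n * (d ^ (n - (k + 1)) * g (k + 1)) - d ^ n * (d ^ (n - k) * g k)))
        + ∑ k ∈ Finset.range n, d ^ n * ((d - 1) * d ^ (n - k - 1) * g k) := by
    rw [← Finset.sum_add_distrib]
    exact Finset.sum_congr rfl fun k _ => by ring
  rw [this, Finset.sum_range_sub (fun k => d ^ n * (d ^ (n - k) * g k))]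
  simp only [Nat.sub_self, Nat.sub_zero, pow_zero, one_mul]
  rw [mul_add, Finset.mul_sum]
  ring

end Aux

/-- The length-`(k+1)` prefix of the path `w`. -/
def pref {n d : ℕ} (w : Fin n → Fin d) (k : ℕ) : List (Fin d) := (List.ofFn w).take (k + 1)

lemma pref_def {n d : ℕ} (w : Fin n → Fin d) (k : ℕ) :
    (List.ofFn w).take (k + 1) = pref w k := rfl

lemma pref_length {n d : ℕ} (w : Fin n → Fin d) {k : ℕ} (hk : k < n) :
    (pref w k).length = k + 1 := by
  simp only [pref, List.length_take, List.length_ofFn]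
  omega

lemma pref_ne_nil {n d : ℕ} (w : Fin n → Fin d) {k : ℕ} (hk : k < n) : pref w k ≠ [] := by
  intro h
  have := pref_length w hk
  rw [h] at this
  simp at this

lemma pref_inj {n d : ℕ} (w : Fin n → Fin d) {k j : ℕ} (hk : k < n) (hj : j < n)
    (h : pref w k = pref w j) : k = j := by
  have := congrArg List.length h
  rw [pref_length w hk, pref_length w hj] at this
  omega

lemma pref_getElem {n d : ℕ} (w : Fin n → Fin d) {k i : ℕ} (hk : k < n) (hik : i ≤ k) :
    (pref w k)[i]'(by rw [pref_length w hk]; omega) = w ⟨i, lt_of_le_of_lt hik hk⟩ := by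
  simp [pref]

lemma pref_getElem? {n d : ℕ} (w : Fin n → Fin d) {k i : ℕ} (hk : k < n) (hik : i ≤ k) :
    (pref w k)[i]? = some (w ⟨i, lt_of_le_of_lt hik hk⟩) := by
  rw [List.getElem?_eq_getElem (by rw [pref_length w hk]; omega)]
  exact congrArg some (pref_getElem w hk hik)

lemma pref_eq_of_agree {n d : ℕ} {w w' : Fin n → Fin d} {k : ℕ} (hk : k < n)
    (h : ∀ i : Fin n, i.val ≤ k → w i = w' i) : pref w k = pref w' k := by
  apply List.ext_getElem
  · rw [pref_length w hk, pref_length w' hk]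
  · intro i h1 h2
    rw [pref_length w hk] at h1
    have hik : i ≤ k := by omega
    rw [pref_getElem w hk hik, pref_getElem w' hk hik]
    exact h _ hik

lemma pref_ne_of_disagree {n d : ℕ} {w w' : Fin n → Fin d} {k j m : ℕ} (hk : k < n) (hj : j < n)
    (hmk : m ≤ k) (hmj : m ≤ j) (hmn : m < n) (hne : w ⟨m, hmn⟩ ≠ w' ⟨m, hmn⟩) :
    pref w k ≠ pref w' j := by
  intro h
  have hkj : k = j := by
    have := congrArg List.length h
    rw [pref_length w hk, pref_length w' hj] at this
    omega
  subst hkj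
  have h1 : (pref w k)[m]? = some (w ⟨m, hmn⟩) := pref_getElem? w hk hmk
  have h2 : (pref w' k)[m]? = some (w' ⟨m, hmn⟩) := pref_getElem? w' hk hmj
  rw [h, h2] at h1
  exact hne (Option.some.inj h1).symm

/-- The number of length-`n` strings agreeing with `g` on the first `k+1` coordinates. -/
lemma aux_card_agree {n d : ℕ} (k : ℕ) (hk : k < n) (g : Fin n → Fin d) :
    (Finset.univ.filter fun f : Fin n → Fin d => ∀ i : Fin n, i.val ≤ k → g i = f i).card
      = d ^ (n - (k + 1)) := by
  classical
  rw [← Fintype.card_subtype]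
  have e : {f : Fin n → Fin d // ∀ i : Fin n, i.val ≤ k → g i = f i}
      ≃ ({i : Fin n // k < i.val} → Fin d) :=
    { toFun := fun f i => f.1 i.1
      invFun := fun u => ⟨fun i => if h : k < i.val then u ⟨i, h⟩ else g i, fun i hi => by
        simp [Nat.not_lt.mpr hi]⟩
      left_inv := fun f => by
        ext i
        by_cases h : k < i.val
        · simp [h]
        · simp [h, (f.2 i (Nat.not_lt.mp h)).symm]
      right_inv := fun u => by
        funext i
        simp [i.2] }
  rw [Fintype.card_congr e, Fintype.card_fun]
  have h1 : Fintype.card {i : Fin n // k < i.val} = n - (k + 1) := by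
    rw [Fintype.card_subtype]
    have h2 : (Finset.univ.filter fun i : Fin n => k < i.val)
        = Finset.Ioi (⟨k, hk⟩ : Fin n) := by
      ext i
      simp [Finset.mem_Ioi, Fin.lt_def]
    rw [h2, Fin.card_Ioi]
    simp only [Fin.val_mk]
    omega
  rw [h1, Fintype.card_fin]

/-- **Second-moment formula** (from the proof of Lemma 2.6). For every `β ∈ ℝ` and
`n ≥ 1`,
`E[(Z_n^{HD}(β))²] = dⁿ·( Σ_{k=0}^{n−1} (d−1)·d^{n−k−1}·e^{kλ(2β)}·e^{2(n−k)λ(β)} + e^{nλ(2β)} )`. -/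
theorem homogeneous_partition_function_second_moment
    {Ω : Type*} [MeasurableSpace Ω] (P : Measure Ω) [IsProbabilityMeasure P]
    (d : ℕ) (hd : 2 ≤ d)
    -- the i.i.d. bulk disorder, indexed by the nonempty lists over `Fin d`
    (V : List (Fin d) → Ω → ℝ) (V0 : Ω → ℝ)
    (hmeas : ∀ x, Measurable (V x)) (hmeas0 : Measurable V0)
    (hindep : iIndepFun V P)
    (hident : ∀ x : List (Fin d), x ≠ [] → Measure.map (V x) P = Measure.map V0 P)
    -- the cumulant generating function `λ`, finite everywhere
    (lam : ℝ → ℝ)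
    (hint : ∀ β : ℝ, Integrable (fun ω => Real.exp (β * V0 ω)) P)
    (hlam : ∀ β : ℝ, lam β = Real.log (∫ ω, Real.exp (β * V0 ω) ∂P))
    -- the homogeneous-disorder partition function
    (Z : ℕ → ℝ → Ω → ℝ)
    (hZ : ∀ (n : ℕ) (β : ℝ) (ω : Ω), Z n β ω =
      ∑ w : Fin n → Fin d, Real.exp (β * ∑ k ∈ Finset.range n,
        V ((List.ofFn w).take (k + 1)) ω))
    (β : ℝ) (n : ℕ) (hn : 1 ≤ n) :
    ∫ ω, (Z n β ω) ^ 2 ∂P =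
      (d : ℝ) ^ n *
        ((∑ k ∈ Finset.range n, ((d : ℝ) - 1) * (d : ℝ) ^ (n - k - 1) *
            Real.exp ((k : ℝ) * lam (2 * β)) * Real.exp (2 * ((n : ℝ) - (k : ℝ)) * lam β)) +
          Real.exp ((n : ℝ) * lam (2 * β))) := by
  classical
  -- the one-variable exponential moments
  have hIpos : ∀ c : ℝ, 0 < ∫ ω, Real.exp (c * V0 ω) ∂P := by
    intro c
    rw [integral_pos_iff_support_of_nonneg (fun ω => (Real.exp_pos _).le) (hint c)]
    have hsupp : (Function.support fun ω => Real.exp (c * V0 ω)) = Set.univ :=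
      Set.eq_univ_of_forall fun ω => Real.exp_ne_zero _
    rw [hsupp]
    simp
  have hexp : ∀ c : ℝ, Real.exp (lam c) = ∫ ω, Real.exp (c * V0 ω) ∂P := fun c => by
    rw [hlam c]; exact Real.exp_log (hIpos c)
  -- the overlap function
  have hovex : ∀ w w' : Fin n → Fin d, ∃ m, m ≤ n ∧ (∀ i : Fin n, i.val < m → w i = w' i) ∧
      (∀ h : m < n, w ⟨m, h⟩ ≠ w' ⟨m, h⟩) := by
    intro w w'
    by_cases hww : ∀ i : Fin n, w i = w' i
    · exact ⟨n, le_refl n, fun i _ => hww i, fun h => absurd h (lt_irrefl n)⟩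
    · push_neg at hww
      obtain ⟨i0, hi0⟩ := hww
      have hex : ∃ k : ℕ, ∃ h : k < n, w ⟨k, h⟩ ≠ w' ⟨k, h⟩ :=
        ⟨i0.val, i0.isLt, by simpa using hi0⟩
      obtain ⟨hmlt, hmne⟩ := Nat.find_spec hex
      refine ⟨Nat.find hex, le_of_lt hmlt, ?_, fun h => hmne⟩
      intro i hi
      by_contra hne
      exact absurd ⟨i.isLt, by simpa using hne⟩ (Nat.find_min hex hi)
  choose ov hov1 hov2 hov3 using hovex
  have hoviff : ∀ (w w' : Fin n → Fin d) (k : ℕ), k < n →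
      (k < ov w w' ↔ ∀ i : Fin n, i.val ≤ k → w i = w' i) := by
    intro w w' k hk
    constructor
    · intro h i hi
      exact hov2 w w' i (lt_of_le_of_lt hi h)
    · intro h
      by_contra hle
      push_neg at hle
      have hlt : ov w w' < n := lt_of_le_of_lt hle hk
      exact hov3 w w' hlt (h ⟨ov w w', hlt⟩ hle)
  -- per-pair expectation
  have key : ∀ w w' : Fin n → Fin d,
      Integrable (fun ω => (∏ k ∈ Finset.range n, Real.exp (β * V (pref w k) ω)) *
          ∏ k ∈ Finset.range n, Real.exp (β * V (pref w' k) ω)) P ∧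
      ∫ ω, (∏ k ∈ Finset.range n, Real.exp (β * V (pref w k) ω)) *
          ∏ k ∈ Finset.range n, Real.exp (β * V (pref w' k) ω) ∂P
        = (∫ ω, Real.exp ((2 * β) * V0 ω) ∂P) ^ (ov w w')
            * (∫ ω, Real.exp (β * V0 ω) ∂P) ^ (2 * (n - ov w w')) := by
    intro w w'
    set m := ov w w' with hmdef
    have hmn : m ≤ n := hov1 w w'
    set c : List (Fin d) → ℝ := fun x => if x.length ≤ m then 2 * β else β with hc
    set f : List (Fin d) → Ω → ℝ := fun x ω => Real.exp (c x * V x ω) with hf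
    have hφmeas : ∀ x : List (Fin d), Measurable fun r : ℝ => Real.exp (c x * r) :=
      fun x => Real.measurable_exp.comp (measurable_id.const_mul (c x))
    have hfmeas : ∀ x, Measurable (f x) :=
      fun x => Real.measurable_exp.comp ((hmeas x).const_mul (c x))
    have hfindep : iIndepFun f P :=
      hindep.comp (fun x r => Real.exp (c x * r)) hφmeas
    have hfint : ∀ x, x ≠ [] → Integrable (f x) P := by
      intro x hx
      have h1 : Integrable (fun r : ℝ => Real.exp (c x * r)) (Measure.map (V x) P) := by
        rw [hident x hx,
          integrable_map_measure (hφmeas x).aestronglyMeasurable hmeas0.aemeasurable]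
        exact hint (c x)
      rw [integrable_map_measure (hφmeas x).aestronglyMeasurable (hmeas x).aemeasurable] at h1
      exact h1
    have hfval : ∀ x, x ≠ [] → ∫ ω, f x ω ∂P = ∫ ω, Real.exp (c x * V0 ω) ∂P := by
      intro x hx
      calc ∫ ω, f x ω ∂P
          = ∫ r, Real.exp (c x * r) ∂(Measure.map (V x) P) :=
            (integral_map (hmeas x).aemeasurable (hφmeas x).aestronglyMeasurable).symm
        _ = ∫ r, Real.exp (c x * r) ∂(Measure.map V0 P) := by rw [hident x hx]
        _ = ∫ ω, Real.exp (c x * V0 ω) ∂P :=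
            integral_map hmeas0.aemeasurable (hφmeas x).aestronglyMeasurable
    set S1 := (Finset.range m).image (pref w) with hS1
    set S2 := (Finset.Ico m n).image (pref w) with hS2
    set S3 := (Finset.Ico m n).image (pref w') with hS3
    have hinjw : ∀ (v : Fin n → Fin d) (s : Finset ℕ), (∀ k ∈ s, k < n) →
        Set.InjOn (pref v) s := by
      intro v s hs k hk j hj h
      exact pref_inj v (hs k hk) (hs j hj) h
    have hrange : ∀ k ∈ Finset.range m, k < n := fun k hk =>
      lt_of_lt_of_le (Finset.mem_range.1 hk) hmn
    have hico : ∀ k ∈ Finset.Ico m n, k < n := fun k hk => (Finset.mem_Ico.1 hk).2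
    have hd23 : Disjoint S2 S3 := by
      rw [Finset.disjoint_left]
      rintro x hx2 hx3
      obtain ⟨k, hk, rfl⟩ := Finset.mem_image.1 hx2
      obtain ⟨j, hj, hje⟩ := Finset.mem_image.1 hx3
      rw [Finset.mem_Ico] at hk hj
      have hmn' : m < n := lt_of_le_of_lt hk.1 hk.2
      exact pref_ne_of_disagree hk.2 hj.2 hk.1 hj.1 hmn' (hov3 w w' hmn') hje.symm
    have hlen1 : ∀ x ∈ S1, x.length ≤ m := by
      intro x hx
      obtain ⟨k, hk, rfl⟩ := Finset.mem_image.1 hx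
      rw [pref_length w (hrange k hk)]
      exact Finset.mem_range.1 hk
    have hlen23 : ∀ x ∈ S2 ∪ S3, m < x.length := by
      intro x hx
      rcases Finset.mem_union.1 hx with hx | hx
      · obtain ⟨k, hk, rfl⟩ := Finset.mem_image.1 hx
        rw [pref_length w (hico k hk)]
        exact lt_of_le_of_lt (Finset.mem_Ico.1 hk).1 (Nat.lt_succ_self k)
      · obtain ⟨k, hk, rfl⟩ := Finset.mem_image.1 hx
        rw [pref_length w' (hico k hk)]
        exact lt_of_le_of_lt (Finset.mem_Ico.1 hk).1 (Nat.lt_succ_self k)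
    have hd123 : Disjoint S1 (S2 ∪ S3) := by
      rw [Finset.disjoint_left]
      intro x hx1 hx23
      exact absurd (hlen1 x hx1) (not_le.mpr (hlen23 x hx23))
    have hSne : ∀ x ∈ S1 ∪ (S2 ∪ S3), x ≠ [] := by
      intro x hx
      rcases Finset.mem_union.1 hx with hx | hx
      · obtain ⟨k, hk, rfl⟩ := Finset.mem_image.1 hx
        exact pref_ne_nil w (hrange k hk)
      · rcases Finset.mem_union.1 hx with hx | hx
        · obtain ⟨k, hk, rfl⟩ := Finset.mem_image.1 hx
          exact pref_ne_nil w (hico k hk)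
        · obtain ⟨k, hk, rfl⟩ := Finset.mem_image.1 hx
          exact pref_ne_nil w' (hico k hk)
    -- value of the coefficient on each part
    have hc1 : ∀ k ∈ Finset.range m, c (pref w k) = 2 * β := by
      intro k hk
      have hkm := Finset.mem_range.1 hk
      have hlen : (pref w k).length ≤ m := by
        rw [pref_length w (hrange k hk)]; omega
      simp only [hc, if_pos hlen]
    have hc2 : ∀ (v : Fin n → Fin d), ∀ k ∈ Finset.Ico m n, c (pref v k) = β := by
      intro v k hk
      obtain ⟨hk1, hk2⟩ := Finset.mem_Ico.1 hk
      have hlen : ¬ (pref v k).length ≤ m := by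
        rw [pref_length v (hico k hk)]; omega
      simp only [hc, if_neg hlen]
    -- pointwise product identity
    have hprodeq : ∀ ω, (∏ k ∈ Finset.range n, Real.exp (β * V (pref w k) ω)) *
        ∏ k ∈ Finset.range n, Real.exp (β * V (pref w' k) ω)
        = ∏ x ∈ S1 ∪ (S2 ∪ S3), f x ω := by
      intro ω
      rw [Finset.prod_union hd123, Finset.prod_union hd23]
      rw [hS1, hS2, hS3,
        Finset.prod_image (hinjw w _ hrange), Finset.prod_image (hinjw w _ hico),
        Finset.prod_image (hinjw w' _ hico)]
      rw [← Finset.prod_range_mul_prod_Ico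
          (fun k => Real.exp (β * V (pref w k) ω)) hmn,
        ← Finset.prod_range_mul_prod_Ico
          (fun k => Real.exp (β * V (pref w' k) ω)) hmn]
      have e1 : ∏ k ∈ Finset.range m, Real.exp (β * V (pref w' k) ω)
          = ∏ k ∈ Finset.range m, Real.exp (β * V (pref w k) ω) := by
        refine Finset.prod_congr rfl fun k hk => ?_
        have hkm : k < m := Finset.mem_range.1 hk
        rw [pref_eq_of_agree (hrange k hk)
          fun i hi => hov2 w w' i (lt_of_le_of_lt hi hkm)]
      rw [e1]
      have e2 : ∏ k ∈ Finset.range m, f (pref w k) ω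
          = ∏ k ∈ Finset.range m,
              (Real.exp (β * V (pref w k) ω) * Real.exp (β * V (pref w k) ω)) := by
        refine Finset.prod_congr rfl fun k hk => ?_
        rw [hf]
        simp only
        rw [hc1 k hk, ← Real.exp_add]
        ring_nf
      have e3 : ∀ (v : Fin n → Fin d), ∏ k ∈ Finset.Ico m n, f (pref v k) ω
          = ∏ k ∈ Finset.Ico m n, Real.exp (β * V (pref v k) ω) := by
        intro v
        refine Finset.prod_congr rfl fun k hk => ?_
        rw [hf]
        simp only
        rw [hc2 v k hk]
      rw [e2, e3 w, e3 w', Finset.prod_mul_distrib]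
      ring
    obtain ⟨hintS, heqS⟩ := aux_prod_integral hfmeas hfindep (S1 ∪ (S2 ∪ S3))
      fun x hx => hfint x (hSne x hx)
    have hfeq : (fun ω => (∏ k ∈ Finset.range n, Real.exp (β * V (pref w k) ω)) *
        ∏ k ∈ Finset.range n, Real.exp (β * V (pref w' k) ω))
        = fun ω => ∏ x ∈ S1 ∪ (S2 ∪ S3), f x ω := funext hprodeq
    constructor
    · rw [hfeq]; exact hintS
    · have := congrArg (fun h : Ω → ℝ => ∫ ω, h ω ∂P) hfeq
      rw [this, heqS, Finset.prod_union hd123, Finset.prod_union hd23]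
      rw [hS1, hS2, hS3,
        Finset.prod_image (hinjw w _ hrange), Finset.prod_image (hinjw w _ hico),
        Finset.prod_image (hinjw w' _ hico)]
      have v1 : ∏ k ∈ Finset.range m, ∫ ω, f (pref w k) ω ∂P
          = (∫ ω, Real.exp ((2 * β) * V0 ω) ∂P) ^ m := by
        rw [Finset.prod_congr rfl fun k hk => by
          rw [hfval _ (pref_ne_nil w (hrange k hk)), hc1 k hk]]
        rw [Finset.prod_const, Finset.card_range]
      have v2 : ∀ v : Fin n → Fin d, ∏ k ∈ Finset.Ico m n, ∫ ω, f (pref v k) ω ∂P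
          = (∫ ω, Real.exp (β * V0 ω) ∂P) ^ (n - m) := by
        intro v
        rw [Finset.prod_congr rfl fun k hk => by
          rw [hfval _ (pref_ne_nil v (hico k hk)), hc2 v k hk]]
        rw [Finset.prod_const, Nat.card_Ico]
      rw [v1, v2 w, v2 w', ← pow_add, two_mul (n - m)]
  -- expand the square of Z
  have hZsq : ∀ ω, (Z n β ω) ^ 2 = ∑ w : Fin n → Fin d, ∑ w' : Fin n → Fin d,
      (∏ k ∈ Finset.range n, Real.exp (β * V (pref w k) ω)) *
        ∏ k ∈ Finset.range n, Real.exp (β * V (pref w' k) ω) := by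
    intro ω
    rw [hZ n β ω, pow_two, Finset.sum_mul_sum]
    refine Finset.sum_congr rfl fun w _ => Finset.sum_congr rfl fun w' _ => ?_
    rw [Finset.mul_sum, Finset.mul_sum, Real.exp_sum, Real.exp_sum]
    rfl
  have hswap : ∫ ω, (Z n β ω) ^ 2 ∂P = ∑ w : Fin n → Fin d, ∑ w' : Fin n → Fin d,
      (∫ ω, Real.exp ((2 * β) * V0 ω) ∂P) ^ (ov w w')
        * (∫ ω, Real.exp (β * V0 ω) ∂P) ^ (2 * (n - ov w w')) := by
    have hrw : (fun ω => (Z n β ω) ^ 2) = fun ω => ∑ w : Fin n → Fin d, ∑ w' : Fin n → Fin d,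
        (∏ k ∈ Finset.range n, Real.exp (β * V (pref w k) ω)) *
          ∏ k ∈ Finset.range n, Real.exp (β * V (pref w' k) ω) := funext hZsq
    rw [hrw, integral_finset_sum _
      (fun w _ => integrable_finset_sum _ fun w' _ => (key w w').1)]
    refine Finset.sum_congr rfl fun w _ => ?_
    rw [integral_finset_sum _ fun w' _ => (key w w').1]
    exact Finset.sum_congr rfl fun w' _ => (key w w').2
  -- abbreviation for the generic overlap value
  set g : ℕ → ℝ := fun j => (∫ ω, Real.exp ((2 * β) * V0 ω) ∂P) ^ j
      * (∫ ω, Real.exp (β * V0 ω) ∂P) ^ (2 * (n - j)) with hgdef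
  have hswap' : ∫ ω, (Z n β ω) ^ 2 ∂P = ∑ w : Fin n → Fin d, ∑ w' : Fin n → Fin d,
      g (ov w w') := hswap
  -- counting step
  have hcount : ∀ (w : Fin n → Fin d) (k : ℕ), k < n → ∀ cst : ℝ,
      (∑ w' : Fin n → Fin d, if k < ov w w' then cst else 0)
        = (d : ℝ) ^ (n - (k + 1)) * cst := by
    intro w k hk cst
    have h1 : ∀ w' : Fin n → Fin d, (if k < ov w w' then cst else 0)
        = if (∀ i : Fin n, i.val ≤ k → w i = w' i) then cst else 0 := fun w' =>
      if_congr (hoviff w w' k hk) rfl rfl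
    rw [Finset.sum_congr rfl fun w' _ => h1 w']
    rw [Finset.sum_ite, Finset.sum_const, Finset.sum_const_zero, add_zero, nsmul_eq_mul]
    rw [aux_card_agree k hk w]
    push_cast
    ring
  have hcardF : (Finset.univ : Finset (Fin n → Fin d)).card = d ^ n := by
    rw [Finset.card_univ, Fintype.card_fun, Fintype.card_fin, Fintype.card_fin]
  -- put it together
  rw [hswap']
  have step1 : ∑ w : Fin n → Fin d, ∑ w' : Fin n → Fin d, g (ov w w')
      = ∑ w : Fin n → Fin d, ∑ w' : Fin n → Fin d,
        (g 0 + ∑ k ∈ Finset.range n, if k < ov w w' then g (k + 1) - g k else 0) := by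
    exact Finset.sum_congr rfl fun w _ => Finset.sum_congr rfl fun w' _ =>
      aux_tele g (hov1 w w')
  rw [step1]
  simp only [Finset.sum_add_distrib]
  have step2 : ∑ _w : Fin n → Fin d, ∑ _w' : Fin n → Fin d, g 0
      = (d : ℝ) ^ n * ((d : ℝ) ^ n * g 0) := by
    rw [Finset.sum_const, Finset.sum_const, hcardF, nsmul_eq_mul, nsmul_eq_mul]
    push_cast
    ring
  have step3 : ∑ w : Fin n → Fin d, ∑ w' : Fin n → Fin d,
      (∑ k ∈ Finset.range n, if k < ov w w' then g (k + 1) - g k else 0)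
      = ∑ k ∈ Finset.range n, (d : ℝ) ^ n * ((d : ℝ) ^ (n - (k + 1)) * (g (k + 1) - g k)) := by
    have e1 : ∀ w : Fin n → Fin d, ∑ w' : Fin n → Fin d,
        (∑ k ∈ Finset.range n, if k < ov w w' then g (k + 1) - g k else 0)
        = ∑ k ∈ Finset.range n, (d : ℝ) ^ (n - (k + 1)) * (g (k + 1) - g k) := by
      intro w
      rw [Finset.sum_comm]
      exact Finset.sum_congr rfl fun k hk =>
        hcount w k (Finset.mem_range.1 hk) (g (k + 1) - g k)
    rw [Finset.sum_congr rfl fun w _ => e1 w]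
    rw [Finset.sum_comm]
    refine Finset.sum_congr rfl fun k _ => ?_
    rw [Finset.sum_const, hcardF, nsmul_eq_mul]
    push_cast
    ring
  rw [step2, step3, aux_abel n (d : ℝ) g]
  -- identify values of g with the exponential moments
  congr 1
  congr 1
  · refine Finset.sum_congr rfl fun k hk => ?_
    have hkn : k < n := Finset.mem_range.1 hk
    have hg1 : Real.exp ((k : ℝ) * lam (2 * β))
        = (∫ ω, Real.exp ((2 * β) * V0 ω) ∂P) ^ k := by
      rw [Real.exp_nat_mul, hexp (2 * β)]
    have hg2 : Real.exp (2 * ((n : ℝ) - (k : ℝ)) * lam β)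
        = (∫ ω, Real.exp (β * V0 ω) ∂P) ^ (2 * (n - k)) := by
      have h2 : 2 * ((n : ℝ) - (k : ℝ)) * lam β = ((2 * (n - k) : ℕ) : ℝ) * lam β := by
        push_cast [Nat.cast_sub hkn.le]
        ring
      rw [h2, Real.exp_nat_mul, hexp β]
    rw [hg1, hg2, hgdef]
    simp only
    ring
  · rw [hgdef]
    simp only [Nat.sub_self, Nat.mul_zero, pow_zero, mul_one]
    rw [Real.exp_nat_mul, hexp (2 * β)]
end

section
/- The function f(β) := λ(β) + log d − β·(deriv λ)(β) has a unique root in (0, ∞) if and only if either V is essentially unbounded above (essSup V = +∞), or w := essSup V is finite and P(V = w) < 1/d. (Lemma 2.1: existence and uniqueness of the critical inverse temperature β_c.) -/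
open MeasureTheory ProbabilityTheory

open scoped ENNReal Topology
open Filter

section Aux
variable {Ω : Type*} [MeasurableSpace Ω] {P : Measure Ω} [IsProbabilityMeasure P]
  {V0 : Ω → ℝ}

lemma exp_interval_bound {a b x v : ℝ} (ha : a ≤ x) (hb : x ≤ b) :
    Real.exp (x * v) ≤ Real.exp (a * v) + Real.exp (b * v) := by
  rcases le_or_gt 0 v with hv | hv
  · exact le_add_of_nonneg_of_le (Real.exp_pos _).le
      (Real.exp_le_exp.mpr (mul_le_mul_of_nonneg_right hb hv))
  · exact le_add_of_le_of_nonneg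
      (Real.exp_le_exp.mpr (mul_le_mul_of_nonpos_right ha hv.le)) (Real.exp_pos _).le

lemma abs_pow_exp_bound (n : ℕ) (β v : ℝ) :
    |v| ^ n * Real.exp (β * v) ≤ Real.exp ((β + n) * v) + Real.exp ((β - n) * v) := by
  have h1 : |v| ^ n ≤ Real.exp ((n : ℝ) * |v|) := by
    calc |v| ^ n ≤ (Real.exp |v|) ^ n :=
          pow_le_pow_left₀ (abs_nonneg v) ((Real.add_one_le_exp |v|).trans'
            (by linarith [abs_nonneg v])) n
      _ = Real.exp ((n : ℝ) * |v|) := by rw [← Real.exp_nat_mul]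
  have h2 : Real.exp ((n : ℝ) * |v|) ≤ Real.exp ((n:ℝ) * v) + Real.exp (-(n:ℝ) * v) := by
    rcases le_or_gt 0 v with hv | hv
    · rw [abs_of_nonneg hv]
      exact le_add_of_le_of_nonneg le_rfl (Real.exp_pos _).le
    · rw [abs_of_neg hv]
      exact le_add_of_nonneg_of_le (Real.exp_pos _).le (by rw [neg_mul, mul_neg])
  calc |v| ^ n * Real.exp (β * v)
      ≤ (Real.exp ((n:ℝ) * v) + Real.exp (-(n:ℝ) * v)) * Real.exp (β * v) :=
        mul_le_mul_of_nonneg_right (h1.trans h2) (Real.exp_pos _).le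
    _ = Real.exp ((β + n) * v) + Real.exp ((β - n) * v) := by
        rw [add_mul, ← Real.exp_add, ← Real.exp_add]; ring_nf

lemma int_pow_exp (hmeas : Measurable V0)
    (hint : ∀ β : ℝ, Integrable (fun ω => Real.exp (β * V0 ω)) P)
    (n : ℕ) (β : ℝ) :
    Integrable (fun ω => (V0 ω) ^ n * Real.exp (β * V0 ω)) P := by
  have hb : Integrable (fun ω => Real.exp ((β + n) * V0 ω) + Real.exp ((β - n) * V0 ω)) P :=
    (hint (β + n)).add (hint (β - n))
  refine hb.mono' ?_ (ae_of_all _ fun ω => ?_)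
  · exact ((hmeas.pow_const n).mul ((hmeas.const_mul β).exp)).aestronglyMeasurable
  · have : ‖(V0 ω) ^ n * Real.exp (β * V0 ω)‖ = |V0 ω| ^ n * Real.exp (β * V0 ω) := by
      rw [norm_mul, norm_pow, Real.norm_eq_abs, Real.norm_eq_abs,
        abs_of_pos (Real.exp_pos _)]
    rw [this]
    exact abs_pow_exp_bound n β (V0 ω)


lemma int_abs_pow_exp (hmeas : Measurable V0)
    (hint : ∀ β : ℝ, Integrable (fun ω => Real.exp (β * V0 ω)) P)
    (n : ℕ) (β : ℝ) :
    Integrable (fun ω => |V0 ω| ^ n * Real.exp (β * V0 ω)) P := by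
  simpa [abs_mul, abs_pow, abs_of_pos (Real.exp_pos _)] using (int_pow_exp hmeas hint n β).abs

lemma hasDerivAt_M (hmeas : Measurable V0)
    (hint : ∀ β : ℝ, Integrable (fun ω => Real.exp (β * V0 ω)) P)
    (k : ℕ) (β₀ : ℝ) :
    HasDerivAt (fun β => ∫ ω, (V0 ω) ^ k * Real.exp (β * V0 ω) ∂P)
      (∫ ω, (V0 ω) ^ (k + 1) * Real.exp (β₀ * V0 ω) ∂P) β₀ := by
  have hmeasx : ∀ (m : ℕ) (x : ℝ), AEStronglyMeasurable
      (fun ω => (V0 ω) ^ m * Real.exp (x * V0 ω)) P :=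
    fun m x => ((hmeas.pow_const m).mul ((hmeas.const_mul x).exp)).aestronglyMeasurable
  have hbound : Integrable (fun ω =>
      |V0 ω| ^ (k+1) * (Real.exp ((β₀ - 1) * V0 ω) + Real.exp ((β₀ + 1) * V0 ω))) P := by
    have := (int_abs_pow_exp hmeas hint (k+1) (β₀-1)).add (int_abs_pow_exp hmeas hint (k+1) (β₀+1))
    exact this.congr (.of_forall fun ω => by simp [mul_add])
  refine (hasDerivAt_integral_of_dominated_loc_of_deriv_le
    (F' := fun x ω => (V0 ω) ^ (k + 1) * Real.exp (x * V0 ω)) (Metric.ball_mem_nhds β₀ one_pos)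
    (.of_forall fun x => hmeasx k x) (int_pow_exp hmeas hint k β₀)
    (hmeasx (k+1) β₀) (ae_of_all _ fun ω x hx => ?_) hbound
    (ae_of_all _ fun ω x hx => ?_)).2
  · have h1 : β₀ - 1 ≤ x := by
      have := abs_sub_lt_iff.mp (by simpa [Real.dist_eq] using Metric.mem_ball.mp hx)
      linarith [this.2]
    have h2 : x ≤ β₀ + 1 := by
      have := abs_sub_lt_iff.mp (by simpa [Real.dist_eq] using Metric.mem_ball.mp hx)
      linarith [this.1]
    have : ‖(V0 ω) ^ (k+1) * Real.exp (x * V0 ω)‖ = |V0 ω| ^ (k+1) * Real.exp (x * V0 ω) := by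
      rw [norm_mul, norm_pow, Real.norm_eq_abs, Real.norm_eq_abs, abs_of_pos (Real.exp_pos _)]
    rw [this]
    exact mul_le_mul_of_nonneg_left (exp_interval_bound h1 h2)
      (pow_nonneg (abs_nonneg _) _)
  · have h := (((hasDerivAt_mul_const (V0 ω)).exp).const_mul ((V0 ω) ^ k) :
      HasDerivAt (fun x : ℝ => (V0 ω) ^ k * Real.exp (x * V0 ω))
        ((V0 ω) ^ k * (Real.exp (x * V0 ω) * V0 ω)) x)
    exact h.congr_deriv (by ring)


lemma M0_pos (hint : ∀ β : ℝ, Integrable (fun ω => Real.exp (β * V0 ω)) P) (β : ℝ) :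
    0 < ∫ ω, Real.exp (β * V0 ω) ∂P := by
  rw [integral_pos_iff_support_of_nonneg_ae (ae_of_all _ fun ω => (Real.exp_pos _).le) (hint β)]
  have : Function.support (fun ω => Real.exp (β * V0 ω)) = Set.univ :=
    Set.eq_univ_of_forall fun ω => (Real.exp_pos _).ne'
  rw [this]
  simp

lemma hasDerivAt_M0 (hmeas : Measurable V0)
    (hint : ∀ β : ℝ, Integrable (fun ω => Real.exp (β * V0 ω)) P) (β : ℝ) :
    HasDerivAt (fun β => ∫ ω, Real.exp (β * V0 ω) ∂P)
      (∫ ω, V0 ω * Real.exp (β * V0 ω) ∂P) β := by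
  have h := hasDerivAt_M hmeas hint 0 β
  simpa [pow_zero, one_mul, pow_one] using h

lemma hasDerivAt_lam (hmeas : Measurable V0)
    (hint : ∀ β : ℝ, Integrable (fun ω => Real.exp (β * V0 ω)) P)
    {lam : ℝ → ℝ} (hlam : ∀ β : ℝ, lam β = Real.log (∫ ω, Real.exp (β * V0 ω) ∂P)) (β : ℝ) :
    HasDerivAt lam
      ((∫ ω, V0 ω * Real.exp (β * V0 ω) ∂P) / (∫ ω, Real.exp (β * V0 ω) ∂P)) β := by
  have : lam = fun β => Real.log (∫ ω, Real.exp (β * V0 ω) ∂P) := funext hlam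
  rw [this]
  exact (hasDerivAt_M0 hmeas hint β).log (M0_pos hint β).ne'

lemma var_pos (hmeas : Measurable V0)
    (hint : ∀ β : ℝ, Integrable (fun ω => Real.exp (β * V0 ω)) P)
    (hnconst : ¬ ∃ c : ℝ, ∀ᵐ ω ∂P, V0 ω = c) (β : ℝ) :
    0 < (∫ ω, (V0 ω)^2 * Real.exp (β * V0 ω) ∂P) * (∫ ω, Real.exp (β * V0 ω) ∂P)
      - (∫ ω, V0 ω * Real.exp (β * V0 ω) ∂P) * (∫ ω, V0 ω * Real.exp (β * V0 ω) ∂P) := by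
  set M0 := ∫ ω, Real.exp (β * V0 ω) ∂P with hM0
  set M1 := ∫ ω, V0 ω * Real.exp (β * V0 ω) ∂P with hM1
  set M2 := ∫ ω, (V0 ω)^2 * Real.exp (β * V0 ω) ∂P with hM2
  have hM0pos : 0 < M0 := M0_pos hint β
  set m := M1 / M0 with hm
  have i2 : Integrable (fun ω => (V0 ω)^2 * Real.exp (β * V0 ω)) P :=
    int_pow_exp hmeas hint 2 β
  have i1 : Integrable (fun ω => V0 ω * Real.exp (β * V0 ω)) P := by
    simpa [pow_one] using int_pow_exp hmeas hint 1 β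
  have i0 := hint β
  have e1 : (fun ω => (V0 ω - m)^2 * Real.exp (β * V0 ω))
      = fun ω => ((V0 ω)^2 * Real.exp (β * V0 ω) - (2*m) * (V0 ω * Real.exp (β * V0 ω)))
        + (m^2) * Real.exp (β * V0 ω) := by
    funext ω; ring
  have iI : Integrable (fun ω => (V0 ω - m)^2 * Real.exp (β * V0 ω)) P := by
    rw [e1]
    exact (i2.sub (i1.const_mul _)).add (i0.const_mul _)
  have isub : Integrable (fun ω => (V0 ω)^2 * Real.exp (β * V0 ω)
      - (2*m) * (V0 ω * Real.exp (β * V0 ω))) P := i2.sub (i1.const_mul _)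
  have ic : Integrable (fun ω => (m^2) * Real.exp (β * V0 ω)) P := i0.const_mul _
  have hIval : ∫ ω, (V0 ω - m)^2 * Real.exp (β * V0 ω) ∂P = M2 - 2*m*M1 + m^2 * M0 := by
    rw [e1, integral_add isub ic, integral_sub i2 (i1.const_mul _), integral_const_mul,
      integral_const_mul]
  have hIpos : 0 < ∫ ω, (V0 ω - m)^2 * Real.exp (β * V0 ω) ∂P := by
    rcases (integral_nonneg (f := fun ω => (V0 ω - m)^2 * Real.exp (β * V0 ω)) (fun ω => mul_nonneg (sq_nonneg _) (Real.exp_pos _).le)).lt_or_eq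
      with h | h
    · exact h
    · exfalso
      have hz := (integral_eq_zero_iff_of_nonneg_ae
        (ae_of_all _ fun ω => mul_nonneg (sq_nonneg _) (Real.exp_pos _).le) iI).mp h.symm
      refine hnconst ⟨m, ?_⟩
      filter_upwards [hz] with ω hω
      have : (V0 ω - m)^2 * Real.exp (β * V0 ω) = 0 := hω
      have h2 : (V0 ω - m)^2 = 0 := by
        by_contra hne
        exact hne (by
          have := mul_eq_zero.mp this
          rcases this with h | h
          · exact h
          · exact absurd h (Real.exp_pos _).ne')
      have := pow_eq_zero_iff (n := 2) (by norm_num) |>.mp h2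
      linarith [this]
  have key : M2 * M0 - M1 * M1 = (∫ ω, (V0 ω - m)^2 * Real.exp (β * V0 ω) ∂P) * M0 := by
    rw [hIval, hm]
    field_simp
    ring
  rw [key]
  exact mul_pos hIpos hM0pos


lemma hasDerivAt_D (hmeas : Measurable V0)
    (hint : ∀ β : ℝ, Integrable (fun ω => Real.exp (β * V0 ω)) P) (β : ℝ) :
    HasDerivAt (fun β => (∫ ω, V0 ω * Real.exp (β * V0 ω) ∂P) / (∫ ω, Real.exp (β * V0 ω) ∂P))
      (((∫ ω, (V0 ω)^2 * Real.exp (β * V0 ω) ∂P) * (∫ ω, Real.exp (β * V0 ω) ∂P)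
        - (∫ ω, V0 ω * Real.exp (β * V0 ω) ∂P) * (∫ ω, V0 ω * Real.exp (β * V0 ω) ∂P))
        / (∫ ω, Real.exp (β * V0 ω) ∂P) ^ 2) β := by
  have h1 : HasDerivAt (fun β => ∫ ω, V0 ω * Real.exp (β * V0 ω) ∂P)
      (∫ ω, (V0 ω)^2 * Real.exp (β * V0 ω) ∂P) β := by
    have h := hasDerivAt_M hmeas hint 1 β
    simpa [pow_one] using h
  exact h1.div (hasDerivAt_M0 hmeas hint β) (M0_pos hint β).ne'

lemma strictMono_D (hmeas : Measurable V0)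
    (hint : ∀ β : ℝ, Integrable (fun ω => Real.exp (β * V0 ω)) P)
    (hnconst : ¬ ∃ c : ℝ, ∀ᵐ ω ∂P, V0 ω = c) :
    StrictMono (fun β => (∫ ω, V0 ω * Real.exp (β * V0 ω) ∂P)
      / (∫ ω, Real.exp (β * V0 ω) ∂P)) := by
  refine strictMono_of_deriv_pos fun x => ?_
  rw [(hasDerivAt_D hmeas hint x).deriv]
  exact div_pos (var_pos hmeas hint hnconst x) (pow_pos (M0_pos hint x) 2)

lemma continuous_lam (hmeas : Measurable V0)
    (hint : ∀ β : ℝ, Integrable (fun ω => Real.exp (β * V0 ω)) P)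
    {lam : ℝ → ℝ} (hlam : ∀ β : ℝ, lam β = Real.log (∫ ω, Real.exp (β * V0 ω) ∂P)) :
    Continuous lam :=
  continuous_iff_continuousAt.mpr fun x =>
    (hasDerivAt_lam hmeas hint hlam x).differentiableAt.continuousAt

lemma slope_le (hmeas : Measurable V0)
    (hint : ∀ β : ℝ, Integrable (fun ω => Real.exp (β * V0 ω)) P)
    (hnconst : ¬ ∃ c : ℝ, ∀ᵐ ω ∂P, V0 ω = c)
    {lam : ℝ → ℝ} (hlam : ∀ β : ℝ, lam β = Real.log (∫ ω, Real.exp (β * V0 ω) ∂P))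
    {a b : ℝ} (hab : a < b) :
    lam b - lam a ≤ ((∫ ω, V0 ω * Real.exp (b * V0 ω) ∂P)
      / (∫ ω, Real.exp (b * V0 ω) ∂P)) * (b - a) := by
  obtain ⟨c, hc, hceq⟩ := exists_hasDerivAt_eq_slope lam
    (fun x => (∫ ω, V0 ω * Real.exp (x * V0 ω) ∂P) / (∫ ω, Real.exp (x * V0 ω) ∂P)) hab
    (continuous_lam hmeas hint hlam).continuousOn
    (fun x _ => hasDerivAt_lam hmeas hint hlam x)
  have hcb := (strictMono_D hmeas hint hnconst).monotone hc.2.le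
  have : lam b - lam a = ((∫ ω, V0 ω * Real.exp (c * V0 ω) ∂P)
      / (∫ ω, Real.exp (c * V0 ω) ∂P)) * (b - a) :=
    (div_eq_iff (sub_ne_zero.mpr hab.ne')).mp hceq.symm
  rw [this]
  exact mul_le_mul_of_nonneg_right hcb (by linarith)

lemma lam_zero {lam : ℝ → ℝ}
    (hlam : ∀ β : ℝ, lam β = Real.log (∫ ω, Real.exp (β * V0 ω) ∂P)) : lam 0 = 0 := by
  rw [hlam 0]
  simp

lemma lam_ge (hmeas : Measurable V0)
    (hint : ∀ β : ℝ, Integrable (fun ω => Real.exp (β * V0 ω)) P)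
    {lam : ℝ → ℝ} (hlam : ∀ β : ℝ, lam β = Real.log (∫ ω, Real.exp (β * V0 ω) ∂P))
    {β c : ℝ} (hβ : 0 ≤ β) {S : Set Ω} (hS : MeasurableSet S)
    (hcS : ∀ ω ∈ S, c ≤ V0 ω) (hpos : 0 < (P S).toReal) :
    β * c + Real.log ((P S).toReal) ≤ lam β := by
  have h1 : ∫ ω in S, Real.exp (β * V0 ω) ∂P ≤ ∫ ω, Real.exp (β * V0 ω) ∂P :=
    setIntegral_le_integral (hint β) (ae_of_all _ fun ω => (Real.exp_pos _).le)
  have h2 : Real.exp (β * c) * (P S).toReal ≤ ∫ ω in S, Real.exp (β * V0 ω) ∂P := by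
    have hconst : ∫ ω in S, Real.exp (β * c) ∂P = Real.exp (β * c) * (P S).toReal := by
      rw [setIntegral_const]
      rw [smul_eq_mul, mul_comm]
      rfl
    rw [← hconst]
    refine setIntegral_mono_on ((integrableOn_const_iff).mpr (Or.inr (measure_lt_top _ _)))
      ((hint β).integrableOn) hS fun ω hω => ?_
    exact Real.exp_le_exp.mpr (mul_le_mul_of_nonneg_left (hcS ω hω) hβ)
  rw [hlam]
  calc β * c + Real.log ((P S).toReal)
      = Real.log (Real.exp (β * c) * (P S).toReal) := by
        rw [Real.log_mul (Real.exp_pos _).ne' hpos.ne', Real.log_exp]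
    _ ≤ Real.log (∫ ω, Real.exp (β * V0 ω) ∂P) :=
        Real.log_le_log (by positivity) (h2.trans h1)


lemma D_lt_w (hmeas : Measurable V0)
    (hint : ∀ β : ℝ, Integrable (fun ω => Real.exp (β * V0 ω)) P)
    {w : ℝ} (hae : ∀ᵐ ω ∂P, V0 ω ≤ w) (hne : ¬ ∀ᵐ ω ∂P, V0 ω = w) (β : ℝ) :
    (∫ ω, V0 ω * Real.exp (β * V0 ω) ∂P) / (∫ ω, Real.exp (β * V0 ω) ∂P) < w := by
  have i1 : Integrable (fun ω => V0 ω * Real.exp (β * V0 ω)) P := by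
    simpa [pow_one] using int_pow_exp hmeas hint 1 β
  have i0 := hint β
  have ig : Integrable (fun ω => (w - V0 ω) * Real.exp (β * V0 ω)) P := by
    have : (fun ω => (w - V0 ω) * Real.exp (β * V0 ω))
        = fun ω => w * Real.exp (β * V0 ω) - V0 ω * Real.exp (β * V0 ω) := by
      funext ω; ring
    rw [this]
    exact (i0.const_mul w).sub i1
  have hgnn : 0 ≤ᵐ[P] fun ω => (w - V0 ω) * Real.exp (β * V0 ω) := by
    filter_upwards [hae] with ω hω
    exact mul_nonneg (by linarith) (Real.exp_pos _).le
  have hIpos : 0 < ∫ ω, (w - V0 ω) * Real.exp (β * V0 ω) ∂P := by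
    rcases (integral_nonneg_of_ae hgnn).lt_or_eq with h | h
    · exact h
    · exfalso
      have hz := (integral_eq_zero_iff_of_nonneg_ae hgnn ig).mp h.symm
      refine hne ?_
      filter_upwards [hz] with ω hω
      have : (w - V0 ω) * Real.exp (β * V0 ω) = 0 := hω
      rcases mul_eq_zero.mp this with h' | h'
      · linarith [sub_eq_zero.mp h']
      · exact absurd h' (Real.exp_pos _).ne'
  have hval : ∫ ω, (w - V0 ω) * Real.exp (β * V0 ω) ∂P
      = w * (∫ ω, Real.exp (β * V0 ω) ∂P) - ∫ ω, V0 ω * Real.exp (β * V0 ω) ∂P := by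
    have : (fun ω => (w - V0 ω) * Real.exp (β * V0 ω))
        = fun ω => w * Real.exp (β * V0 ω) - V0 ω * Real.exp (β * V0 ω) := by
      funext ω; ring
    rw [this, integral_sub (i0.const_mul w) i1, integral_const_mul]
  rw [hval] at hIpos
  rw [div_lt_iff₀ (M0_pos hint β)]
  linarith

lemma pos_meas_of_lt_essSup {c : ℝ}
    (hc : (c : EReal) < essSup (fun ω => (V0 ω : EReal)) P) :
    0 < (P {ω | c < V0 ω}).toReal := by
  refine ENNReal.toReal_pos (fun h0 => ?_) (measure_ne_top _ _)
  have hae : ∀ᵐ ω ∂P, ¬ (c < V0 ω) := by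
    rw [ae_iff]
    simpa using h0
  have : essSup (fun ω => (V0 ω : EReal)) P ≤ (c : EReal) := by
    refine essSup_le_of_ae_le _ ?_
    filter_upwards [hae] with ω hω
    exact EReal.coe_le_coe_iff.mpr (not_lt.mp hω)
  exact absurd this (not_le.mpr hc)

lemma tendsto_exp_lam (hmeas : Measurable V0)
    (hint : ∀ β : ℝ, Integrable (fun ω => Real.exp (β * V0 ω)) P)
    {lam : ℝ → ℝ} (hlam : ∀ β : ℝ, lam β = Real.log (∫ ω, Real.exp (β * V0 ω) ∂P))
    {w : ℝ} (hae : ∀ᵐ ω ∂P, V0 ω ≤ w) :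
    Tendsto (fun β => Real.exp (lam β - β * w)) atTop
      (𝓝 ((P {ω | V0 ω = w}).toReal)) := by
  have hSmeas : MeasurableSet {ω | V0 ω = w} := hmeas (measurableSet_singleton w)
  have hDCT : Tendsto (fun β => ∫ ω, Real.exp (β * (V0 ω - w)) ∂P) atTop
      (𝓝 (∫ ω, Set.indicator {ω | V0 ω = w} (fun _ => (1:ℝ)) ω ∂P)) := by
    refine tendsto_integral_filter_of_dominated_convergence (fun _ => (1:ℝ))
      (.of_forall fun β => ((hmeas.sub_const w).const_mul β).exp.aestronglyMeasurable)
      ?_ (integrable_const 1) ?_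
    · filter_upwards [eventually_ge_atTop (0:ℝ)] with β hβ
      filter_upwards [hae] with ω hω
      rw [Real.norm_eq_abs, abs_of_pos (Real.exp_pos _)]
      exact Real.exp_le_one_iff.mpr (mul_nonpos_of_nonneg_of_nonpos hβ (by linarith))
    · filter_upwards [hae] with ω hω
      rcases eq_or_lt_of_le hω with heq | hlt
      · have : ∀ β : ℝ, Real.exp (β * (V0 ω - w)) = 1 := by
          intro β; rw [heq]; simp
        rw [Set.indicator_of_mem (show ω ∈ {ω | V0 ω = w} from heq)]
        simpa [this] using tendsto_const_nhds
      · rw [Set.indicator_of_notMem (show ω ∉ {ω | V0 ω = w} from hlt.ne)]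
        have hneg : V0 ω - w < 0 := by linarith
        have h1 : Tendsto (fun β : ℝ => β * (V0 ω - w)) atTop atBot :=
          tendsto_id.atTop_mul_const_of_neg hneg
        exact Real.tendsto_exp_atBot.comp h1
  have hval : ∫ ω, Set.indicator {ω | V0 ω = w} (fun _ => (1:ℝ)) ω ∂P
      = (P {ω | V0 ω = w}).toReal := by
    rw [integral_indicator hSmeas, setIntegral_const, smul_eq_mul, mul_one]
    rfl
  rw [hval] at hDCT
  refine hDCT.congr fun β => ?_
  have : ∫ ω, Real.exp (β * (V0 ω - w)) ∂P
      = (∫ ω, Real.exp (β * V0 ω) ∂P) / Real.exp (β * w) := by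
    rw [← integral_div]
    congr 1
    funext ω
    rw [← Real.exp_sub]
    ring_nf
  rw [this, hlam, Real.exp_sub, Real.exp_log (M0_pos hint β)]

end Aux

/-- **Lemma 2.1** (existence and uniqueness of the critical inverse temperature).
The function `f(β) := λ(β) + log d − β·λ'(β)` has a unique root in `(0,∞)` if and
only if either `V` is essentially unbounded above, or `w := essSup V` is finite and
`P(V = w) < 1/d`. -/
theorem critical_beta_exists_unique_iff
    {Ω : Type*} [MeasurableSpace Ω] (P : Measure Ω) [IsProbabilityMeasure P]
    (d : ℕ) (hd : 2 ≤ d)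
    (V0 : Ω → ℝ) (hmeas0 : Measurable V0)
    (hnconst : ¬ ∃ c : ℝ, ∀ᵐ ω ∂P, V0 ω = c)
    (lam : ℝ → ℝ)
    (hint : ∀ β : ℝ, Integrable (fun ω => Real.exp (β * V0 ω)) P)
    (hlam : ∀ β : ℝ, lam β = Real.log (∫ ω, Real.exp (β * V0 ω) ∂P))
    (f : ℝ → ℝ)
    (hf : ∀ β : ℝ, f β = lam β + Real.log d - β * deriv lam β) :
    (∃! β : ℝ, 0 < β ∧ f β = 0) ↔
      (essSup (fun ω => (V0 ω : EReal)) P = ⊤ ∨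
        ∃ w : ℝ, essSup (fun ω => (V0 ω : EReal)) P = (w : EReal) ∧
          P {ω | V0 ω = w} < (1 : ℝ≥0∞) / d) := by
  classical
  set D : ℝ → ℝ := fun β =>
    (∫ ω, V0 ω * Real.exp (β * V0 ω) ∂P) / (∫ ω, Real.exp (β * V0 ω) ∂P) with hDdef
  have hlamD : ∀ β, HasDerivAt lam (D β) β := fun β => hasDerivAt_lam hmeas0 hint hlam β
  have hderiv : ∀ β, deriv lam β = D β := fun β => (hlamD β).deriv
  have hf2 : ∀ β, f β = lam β + Real.log d - β * D β := fun β => by rw [hf β, hderiv β]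
  have hDmono : StrictMono D := strictMono_D hmeas0 hint hnconst
  have hDdAt : ∀ β, HasDerivAt D (deriv D β) β := fun β =>
    (hasDerivAt_D hmeas0 hint β).differentiableAt.hasDerivAt
  have hQpos : ∀ β, 0 < deriv D β := fun β => by
    rw [(hasDerivAt_D hmeas0 hint β).deriv]
    exact div_pos (var_pos hmeas0 hint hnconst β) (pow_pos (M0_pos hint β) 2)
  have hfun : f = fun β => lam β + Real.log d - β * D β := funext hf2
  have hfAt : ∀ β, HasDerivAt f (-(β * deriv D β)) β := by
    intro β
    have h1 : HasDerivAt (fun β => lam β + Real.log d) (D β) β := (hlamD β).add_const _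
    have h2 : HasDerivAt (fun β : ℝ => β * D β) (1 * D β + β * deriv D β) β :=
      (hasDerivAt_id β).mul (hDdAt β)
    have := h1.sub h2
    rw [hfun]
    exact this.congr_deriv (by ring)
  have hfcont : Continuous f :=
    continuous_iff_continuousAt.mpr fun x => (hfAt x).differentiableAt.continuousAt
  have hanti : StrictAntiOn f (Set.Ici 0) := by
    refine strictAntiOn_of_deriv_neg (convex_Ici 0) hfcont.continuousOn fun x hx => ?_
    rw [interior_Ici] at hx
    rw [(hfAt x).deriv]
    exact neg_lt_zero.mpr (mul_pos hx (hQpos x))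
  have hdR : (1:ℝ) < (d:ℝ) := by
    have : (2:ℝ) ≤ (d:ℝ) := by exact_mod_cast hd
    linarith
  have hlogd : 0 < Real.log d := Real.log_pos hdR
  have hf0 : f 0 = Real.log d := by rw [hf2 0, lam_zero hlam]; ring
  have hlam0 : lam 0 = 0 := lam_zero hlam
  -- Reduction: unique root iff f is somewhere ≤ 0 on (0,∞)
  have key1 : (∃! β : ℝ, 0 < β ∧ f β = 0) ↔ ∃ β : ℝ, 0 < β ∧ f β ≤ 0 := by
    constructor
    · rintro ⟨β, ⟨hb, he⟩, -⟩
      exact ⟨β, hb, he.le⟩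
    · rintro ⟨β₀, hb0, hle⟩
      have hIcc : (0:ℝ) ∈ Set.Icc (f β₀) (f 0) := ⟨hle, by rw [hf0]; exact hlogd.le⟩
      obtain ⟨c, hc, hfc⟩ := intermediate_value_Icc' hb0.le hfcont.continuousOn hIcc
      have hcpos : 0 < c := by
        rcases hc.1.lt_or_eq with h | h
        · exact h
        · exfalso
          rw [← h, hf0] at hfc
          linarith
      refine ⟨c, ⟨hcpos, hfc⟩, ?_⟩
      rintro y ⟨hy, hfy⟩
      exact hanti.injOn (Set.mem_Ici.mpr hy.le) (Set.mem_Ici.mpr hcpos.le)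
        (by rw [hfy, hfc])
  rw [key1]
  -- slope inequalities
  have slope0 : ∀ {b : ℝ}, 0 < b → lam b ≤ D b * b := by
    intro b hb
    have := slope_le hmeas0 hint hnconst hlam hb
    rw [hlam0] at this
    simpa using this
  have slopeX : ∀ {a b : ℝ}, a < b → lam b - lam a ≤ D b * (b - a) := fun hab =>
    slope_le hmeas0 hint hnconst hlam hab
  have hWbot : essSup (fun ω => (V0 ω : EReal)) P ≠ ⊥ := by
    intro h
    have hae := ae_le_essSup (μ := P) (f := fun ω => (V0 ω : EReal))
    rw [h] at hae
    have hPne : P ≠ 0 := IsProbabilityMeasure.ne_zero P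
    haveI : (ae P).NeBot := ae_neBot.mpr hPne
    obtain ⟨ω, hω⟩ := hae.exists
    exact EReal.coe_ne_bot (V0 ω) (le_bot_iff.mp hω)
  by_cases hWtop : essSup (fun ω => (V0 ω : EReal)) P = ⊤
  · -- essentially unbounded above: both sides hold
    refine ⟨fun _ => Or.inl hWtop, fun _ => ?_⟩
    set K := lam 1 + Real.log d + 1 with hK
    have hKlt : (K : EReal) < essSup (fun ω => (V0 ω : EReal)) P := by
      rw [hWtop]; exact EReal.coe_lt_top K
    have hr : 0 < (P {ω | K < V0 ω}).toReal := pos_meas_of_lt_essSup hKlt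
    set r := (P {ω | K < V0 ω}).toReal with hrdef
    set β := max 2 (-Real.log r) with hβdef
    have hβ2 : (2:ℝ) ≤ β := le_max_left _ _
    have hβlog : -Real.log r ≤ β := le_max_right _ _
    have hβpos : (0:ℝ) < β := by linarith
    have hA : β * K + Real.log r ≤ lam β := by
      refine lam_ge hmeas0 hint hlam hβpos.le ?_ (fun ω hω => le_of_lt hω) hr
      exact hmeas0 measurableSet_Ioi
    have hC : lam β ≤ D β * β := slope0 hβpos
    have hB : lam β - lam 1 ≤ D β * (β - 1) := slopeX (by linarith)
    have hDK : K - 1 ≤ D β := by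
      have h1 : β * (K - 1) ≤ β * D β := by nlinarith [hA, hC, hβlog]
      exact (mul_le_mul_iff_right₀ hβpos).mp h1
    refine ⟨β, hβpos, ?_⟩
    rw [hf2 β]
    nlinarith [hB, hDK]
  · -- essSup is a real number w
    obtain ⟨w, hw⟩ : ∃ w : ℝ, essSup (fun ω => (V0 ω : EReal)) P = (w : EReal) := by
      set W := essSup (fun ω => (V0 ω : EReal)) P with hWdef
      clear_value W
      induction W using EReal.rec with
      | bot => exact absurd rfl hWbot
      | coe a => exact ⟨a, rfl⟩
      | top => exact absurd rfl hWtop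
    have hae' : ∀ᵐ ω ∂P, V0 ω ≤ w := by
      have hae := ae_le_essSup (μ := P) (f := fun ω => (V0 ω : EReal))
      rw [hw] at hae
      filter_upwards [hae] with ω hω
      exact EReal.coe_le_coe_iff.mp hω
    have hnew : ¬ ∀ᵐ ω ∂P, V0 ω = w := fun h => hnconst ⟨w, h⟩
    have hSmeas : MeasurableSet {ω | V0 ω = w} := hmeas0 (measurableSet_singleton w)
    set pr := (P {ω | V0 ω = w}).toReal with hprdef
    have hdne : ((d:ℝ≥0∞)) ≠ 0 := by
      simp only [ne_eq, Nat.cast_eq_zero]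
      omega
    have h1dne : (1:ℝ≥0∞)/(d:ℝ≥0∞) ≠ ⊤ := by
      simp [ENNReal.div_eq_top, hdne]
    have hprlt : P {ω | V0 ω = w} < (1:ℝ≥0∞)/d ↔ pr < 1/(d:ℝ) := by
      rw [hprdef, ← ENNReal.toReal_lt_toReal (measure_ne_top P _) h1dne]
      congr! 1
      rw [ENNReal.toReal_div, ENNReal.toReal_one, ENNReal.toReal_natCast]
    have hRHS : (essSup (fun ω => (V0 ω : EReal)) P = ⊤ ∨
        ∃ w' : ℝ, essSup (fun ω => (V0 ω : EReal)) P = (w' : EReal) ∧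
          P {ω | V0 ω = w'} < (1 : ℝ≥0∞) / d) ↔ pr < 1/(d:ℝ) := by
      constructor
      · rintro (h | ⟨w', hw', hlt⟩)
        · exact absurd h hWtop
        · have : w' = w := by
            rw [hw] at hw'
            exact (EReal.coe_eq_coe_iff.mp hw').symm
          rw [this] at hlt
          exact hprlt.mp hlt
      · intro h
        exact Or.inr ⟨w, hw, hprlt.mpr h⟩
    rw [hRHS]
    have hdRpos : (0:ℝ) < (d:ℝ) := by linarith
    constructor
    · -- existence of β with f β ≤ 0 implies pr < 1/d
      rintro ⟨β, hβpos, hfβ⟩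
      by_contra hge
      push_neg at hge
      have hprpos : 0 < pr := lt_of_lt_of_le (by positivity) hge
      have hA : β * w + Real.log pr ≤ lam β := by
        refine lam_ge hmeas0 hint hlam hβpos.le hSmeas (fun ω hω => le_of_eq hω.symm) hprpos
      have hDlt : D β < w := D_lt_w hmeas0 hint hae' hnew β
      have hBlt : β * D β < β * w := mul_lt_mul_of_pos_left hDlt hβpos
      have hClog : -Real.log d ≤ Real.log pr := by
        have := Real.log_le_log (by positivity : (0:ℝ) < 1/(d:ℝ)) hge
        rwa [one_div, Real.log_inv] at this
      rw [hf2 β] at hfβ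
      linarith
    · -- pr < 1/d implies existence of β with f β ≤ 0
      intro hprlt'
      have htend := tendsto_exp_lam hmeas0 hint hlam hae'
      have hev : ∀ᶠ β in atTop, Real.exp (lam β - β * w) < 1/(d:ℝ) :=
        htend.eventually_lt_const hprlt'
      obtain ⟨x₀, hx₀, hx₀1⟩ := (hev.and (eventually_ge_atTop (1:ℝ))).exists
      have hx₀pos : (0:ℝ) < x₀ := by linarith
      have hlt0 : lam x₀ - x₀ * w < -Real.log d := by
        have := (Real.lt_log_iff_exp_lt (by positivity : (0:ℝ) < 1/(d:ℝ))).mpr hx₀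
        rwa [one_div, Real.log_inv] at this
      set ε := (-Real.log d - (lam x₀ - x₀ * w)) / x₀ with hεdef
      have hεpos : 0 < ε := div_pos (by linarith) hx₀pos
      have hwlt : ((w - ε/2 : ℝ) : EReal) < essSup (fun ω => (V0 ω : EReal)) P := by
        rw [hw]
        exact EReal.coe_lt_coe_iff.mpr (by linarith)
      have hr : 0 < (P {ω | w - ε/2 < V0 ω}).toReal := pos_meas_of_lt_essSup hwlt
      set r := (P {ω | w - ε/2 < V0 ω}).toReal with hrdef
      set β := max (x₀ + 1) ((2/ε) * (-Real.log r)) with hβdef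
      have hβx : x₀ + 1 ≤ β := le_max_left _ _
      have hβr : (2/ε) * (-Real.log r) ≤ β := le_max_right _ _
      have hβpos : (0:ℝ) < β := by linarith
      have hA : β * (w - ε/2) + Real.log r ≤ lam β := by
        refine lam_ge hmeas0 hint hlam hβpos.le ?_ (fun ω hω => le_of_lt hω) hr
        exact hmeas0 measurableSet_Ioi
      have hC : lam β ≤ D β * β := slope0 hβpos
      have hlogr : -Real.log r ≤ β * (ε/2) := by
        have h2 : (ε/2) * ((2/ε) * (-Real.log r)) = -Real.log r := by
          field_simp
        have h3 := mul_le_mul_of_nonneg_left hβr (by positivity : (0:ℝ) ≤ ε/2)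
        rw [h2] at h3
        linarith
      have hDge : w - ε ≤ D β := by
        have h1 : β * (w - ε) ≤ β * D β := by nlinarith [hA, hC, hlogr]
        exact (mul_le_mul_iff_right₀ hβpos).mp h1
      have hB : lam β - lam x₀ ≤ D β * (β - x₀) := slopeX (by linarith)
      have hxε : x₀ * ε = -Real.log d - (lam x₀ - x₀ * w) := by
        rw [hεdef]
        field_simp
      refine ⟨β, hβpos, ?_⟩
      rw [hf2 β]
      have hxD : x₀ * (w - ε) ≤ x₀ * D β := mul_le_mul_of_nonneg_left hDge hx₀pos.le
      nlinarith [hB, hxD, hxε]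
end
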